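/- arXiv:1004.3964 — 8 statements merged into one kernel-verified Lean document; each statement's English description precedes it below -/
import Mathlib

section
/- There is a bijection between increasing 1-2 trees on the vertex set {0,1,...,n} and simsun permutations in S_n, under which a tree with k+1 leaves corresponds to a simsun permutation with exactly k descents. -/
/-- A permutation `σ ∈ S_n` is *simsun* if for every `k`, the subword of `σ`
restricted to the `k` smallest values has no double descent, i.e. no three
consecutive (in that subword) decreasing elements. -/
def Simsun {n : ℕ} (σ : Equiv.Perm (Fin n)) : Prop :=
  ∀ k : ℕ, ¬ ∃ i j l : Fin n, i < j ∧ j < l ∧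
    (σ i).val < k ∧ (σ j).val < k ∧ (σ l).val < k ∧
    σ l < σ j ∧ σ j < σ i ∧
    (∀ m : Fin n, i < m → m < j → k ≤ (σ m).val) ∧
    (∀ m : Fin n, j < m → m < l → k ≤ (σ m).val)

def DoubleSimsun {n : ℕ} (σ : Equiv.Perm (Fin n)) : Prop :=
  Simsun σ ∧ Simsun σ⁻¹

def Avoids123 {n : ℕ} (σ : Equiv.Perm (Fin n)) : Prop :=
  ¬ ∃ i j k : Fin n, i < j ∧ j < k ∧ σ i < σ j ∧ σ j < σ k

def Avoids132 {n : ℕ} (σ : Equiv.Perm (Fin n)) : Prop :=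
  ¬ ∃ i j k : Fin n, i < j ∧ j < k ∧ σ i < σ k ∧ σ k < σ j

def Avoids213 {n : ℕ} (σ : Equiv.Perm (Fin n)) : Prop :=
  ¬ ∃ i j k : Fin n, i < j ∧ j < k ∧ σ j < σ i ∧ σ i < σ k

def Avoids231 {n : ℕ} (σ : Equiv.Perm (Fin n)) : Prop :=
  ¬ ∃ i j k : Fin n, i < j ∧ j < k ∧ σ k < σ i ∧ σ i < σ j

def Avoids312 {n : ℕ} (σ : Equiv.Perm (Fin n)) : Prop :=
  ¬ ∃ i j k : Fin n, i < j ∧ j < k ∧ σ j < σ k ∧ σ k < σ i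

def Avoids321 {n : ℕ} (σ : Equiv.Perm (Fin n)) : Prop :=
  ¬ ∃ i j k : Fin n, i < j ∧ j < k ∧ σ k < σ j ∧ σ j < σ i

/-- An occurrence of the pattern 4132 at positions `i1 < i2 < i3 < i4`. -/
def Pattern4132At {n : ℕ} (σ : Equiv.Perm (Fin n)) (i1 i2 i3 i4 : Fin n) : Prop :=
  i1 < i2 ∧ i2 < i3 ∧ i3 < i4 ∧ σ i2 < σ i4 ∧ σ i4 < σ i3 ∧ σ i3 < σ i1

/-- An occurrence of the pattern 51342 at positions `j1 < j2 < j3 < j4 < j5`. -/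
def Pattern51342At {n : ℕ} (σ : Equiv.Perm (Fin n)) (j1 j2 j3 j4 j5 : Fin n) : Prop :=
  j1 < j2 ∧ j2 < j3 ∧ j3 < j4 ∧ j4 < j5 ∧
  σ j2 < σ j5 ∧ σ j5 < σ j3 ∧ σ j3 < σ j4 ∧ σ j4 < σ j1

/-- `σ` has no occurrence of the pattern 4132. -/
def No4132 {n : ℕ} (σ : Equiv.Perm (Fin n)) : Prop :=
  ¬ ∃ i1 i2 i3 i4 : Fin n, Pattern4132At σ i1 i2 i3 i4

/-- Every occurrence of the pattern 4132 in `σ` is contained in an occurrence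
of the pattern 51342 (its four indices are among the five indices). -/
def Every4132In51342 {n : ℕ} (σ : Equiv.Perm (Fin n)) : Prop :=
  ∀ i1 i2 i3 i4 : Fin n, Pattern4132At σ i1 i2 i3 i4 →
    ∃ j1 j2 j3 j4 j5 : Fin n, Pattern51342At σ j1 j2 j3 j4 j5 ∧
      ({i1, i2, i3, i4} : Set (Fin n)) ⊆ ({j1, j2, j3, j4, j5} : Set (Fin n))

def Contains35142 {n : ℕ} (σ : Equiv.Perm (Fin n)) : Prop :=
  ∃ i1 i2 i3 i4 i5 : Fin n, i1 < i2 ∧ i2 < i3 ∧ i3 < i4 ∧ i4 < i5 ∧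
    σ i3 < σ i5 ∧ σ i5 < σ i1 ∧ σ i1 < σ i4 ∧ σ i4 < σ i2

def Contains42513 {n : ℕ} (σ : Equiv.Perm (Fin n)) : Prop :=
  ∃ i1 i2 i3 i4 i5 : Fin n, i1 < i2 ∧ i2 < i3 ∧ i3 < i4 ∧ i4 < i5 ∧
    σ i4 < σ i2 ∧ σ i2 < σ i5 ∧ σ i5 < σ i1 ∧ σ i1 < σ i3

/-- A Motzkin path encoded as a list of steps `1` (up), `-1` (down), `0` (level):
all prefix sums are nonnegative and the total sum is zero. -/
def MotzkinPath (p : List ℤ) : Prop :=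
  (∀ s ∈ p, s = 1 ∨ s = -1 ∨ s = 0) ∧ (∀ t : List ℤ, t <+: p → 0 ≤ t.sum) ∧ p.sum = 0

/-- The path has no two consecutive up steps. -/
def UUFree (p : List ℤ) : Prop := ¬ ([1, 1] : List ℤ) <:+: p

-- The number of descents of a permutation
open scoped Classical in
noncomputable def numDescents {n : ℕ} (σ : Equiv.Perm (Fin n)) : ℕ :=
  (Finset.univ.filter fun i : Fin n =>
    ∃ h : i.val + 1 < n, σ ⟨i.val + 1, h⟩ < σ i).card

/-- `τ_1 > τ_2 < τ_3 > τ_4 < ⋯` (indices are 0-based here). -/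
def Alternating {m : ℕ} (τ : Equiv.Perm (Fin m)) : Prop :=
  ∀ i : Fin m, ∀ h : i.val + 1 < m,
    if i.val % 2 = 0 then τ ⟨i.val + 1, h⟩ < τ i else τ i < τ ⟨i.val + 1, h⟩

/-- An increasing 1-2 tree on `{0,1,…,n}`: each vertex `i+1` (for `i : Fin n`)
has a parent strictly smaller than it (so the tree is rooted at `0` with all
root-paths increasing), and every vertex has at most two children.  The order
of subtrees is irrelevant. -/
structure Inc12Tree (n : ℕ) where
  parent : Fin n → Fin (n + 1)
  inc : ∀ i : Fin n, (parent i).val < i.val + 1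
  deg : ∀ v : Fin (n + 1), (Finset.univ.filter fun i : Fin n => parent i = v).card ≤ 2

open scoped Classical in
noncomputable def Inc12Tree.numLeaves {n : ℕ} (T : Inc12Tree n) : ℕ :=
  (Finset.univ.filter fun v : Fin (n + 1) => ∀ i : Fin n, T.parent i ≠ v).card


namespace SP
open Equiv Finset
open scoped Classical
variable {n : ℕ}

lemma tree_ext {T1 T2 : Inc12Tree n} (h : T1.parent = T2.parent) : T1 = T2 := by
  cases T1; cases T2; simpa using h

noncomputable def childCount (T : Inc12Tree n) (v : Fin (n+1)) : ℕ :=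
  (Finset.univ.filter fun i : Fin n => T.parent i = v).card

def IsLeaf (T : Inc12Tree n) (v : Fin (n+1)) : Prop := ∀ i : Fin n, T.parent i ≠ v

lemma isLeaf_iff {T : Inc12Tree n} {v : Fin (n+1)} : IsLeaf T v ↔ childCount T v = 0 := by
  rw [childCount, Finset.card_eq_zero, Finset.filter_eq_empty_iff]
  simp [IsLeaf]

lemma numLeaves_eq (T : Inc12Tree n) :
    T.numLeaves = (Finset.univ.filter fun v : Fin (n+1) => IsLeaf T v).card := by
  rw [Inc12Tree.numLeaves]
  congr 1
  ext v
  rw [Finset.mem_filter, Finset.mem_filter]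
  simp [IsLeaf]

/-- total child count equals n -/
lemma sum_childCount (T : Inc12Tree n) : ∑ v : Fin (n+1), childCount T v = n := by
  classical
  have := Finset.card_eq_sum_card_fiberwise
    (f := T.parent) (s := (univ : Finset (Fin n))) (t := (univ : Finset (Fin (n+1))))
    (fun x _ => mem_univ _)
  simpa [childCount] using this.symm

lemma tree_degree_count (T : Inc12Tree n) :
    (univ.filter (fun v : Fin (n+1) => childCount T v ≤ 1 ∧ ¬ IsLeaf T v)).card
      + 2 * T.numLeaves = n + 2 := by
  classical
  set S0 := univ.filter (fun v : Fin (n+1) => childCount T v = 0) with hS0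
  set S1 := univ.filter (fun v : Fin (n+1) => childCount T v = 1) with hS1
  set S2 := univ.filter (fun v : Fin (n+1) => childCount T v = 2) with hS2
  have hfilter1 : univ.filter (fun v : Fin (n+1) => childCount T v ≤ 1 ∧ ¬ IsLeaf T v) = S1 := by
    ext v
    simp only [hS1, mem_filter, mem_univ, true_and, isLeaf_iff]
    omega
  have hleaf : T.numLeaves = S0.card := by
    rw [numLeaves_eq]
    congr 1
    ext v
    simp only [hS0, mem_filter, mem_univ, true_and, isLeaf_iff]
  have hdeg : ∀ v : Fin (n+1), childCount T v ≤ 2 := fun v => T.deg v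
  have e1 : univ.filter (fun v : Fin (n+1) => ¬ childCount T v = 0 ∧ childCount T v = 1) = S1 := by
    ext v
    simp only [hS1, mem_filter, mem_univ, true_and]
    omega
  have e2 : univ.filter (fun v : Fin (n+1) => ¬ childCount T v = 0 ∧ ¬ childCount T v = 1) = S2 := by
    ext v
    simp only [hS2, mem_filter, mem_univ, true_and]
    have := hdeg v
    omega
  have hpart : S0.card + S1.card + S2.card = n + 1 := by
    have h1 : S0.card + (univ.filter (fun v : Fin (n+1) => ¬ childCount T v = 0)).card = n + 1 := by
      have := Finset.card_filter_add_card_filter_not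
        (s := (univ : Finset (Fin (n+1)))) (p := fun v => childCount T v = 0)
      simpa [hS0] using this
    have h2 : S1.card + S2.card
        = (univ.filter (fun v : Fin (n+1) => ¬ childCount T v = 0)).card := by
      have := Finset.card_filter_add_card_filter_not
        (s := univ.filter (fun v : Fin (n+1) => ¬ childCount T v = 0))
        (p := fun v => childCount T v = 1)
      rw [Finset.filter_filter, Finset.filter_filter] at this
      rwa [e1, e2] at this
    omega
  have hsum : S1.card + 2 * S2.card = n := by
    have hs := Finset.sum_filter_add_sum_filter_not (univ : Finset (Fin (n+1)))
      (fun v => childCount T v = 0) (fun v => childCount T v)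
    have hs2 := Finset.sum_filter_add_sum_filter_not
      (univ.filter (fun v : Fin (n+1) => ¬ childCount T v = 0))
      (fun v => childCount T v = 1) (fun v => childCount T v)
    rw [Finset.filter_filter, Finset.filter_filter, e1, e2] at hs2
    have z0 : ∑ v ∈ S0, childCount T v = 0 := by
      apply Finset.sum_eq_zero
      intro v hv
      simp only [hS0, mem_filter] at hv
      exact hv.2
    have z1 : ∑ v ∈ S1, childCount T v = S1.card := by
      rw [Finset.sum_congr rfl (g := fun _ => 1) (fun v hv => by
        simp only [hS1, mem_filter] at hv; exact hv.2)]
      simp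
    have z2 : ∑ v ∈ S2, childCount T v = 2 * S2.card := by
      rw [Finset.sum_congr rfl (g := fun _ => 2) (fun v hv => by
        simp only [hS2, mem_filter] at hv; exact hv.2)]
      simp [Nat.mul_comm]
    have htot := sum_childCount T
    rw [← hS0] at hs
    rw [z0, ← hs2, z1, z2, htot] at hs
    omega
  rw [hfilter1, hleaf]
  omega


lemma card_filter_succ {m : ℕ} (P : Fin (m+1) → Prop) [inst : DecidablePred P] :
    (univ.filter P).card
      = (@Finset.filter _ (fun i : Fin m => P i.castSucc) (fun i => inst i.castSucc) univ).card
        + (if P (Fin.last m) then 1 else 0) := by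
  rw [Finset.card_filter, Finset.card_filter, Fin.sum_univ_castSucc]

noncomputable def attachParent (T : Inc12Tree n) (v : Fin (n+1)) (i : Fin (n+1)) : Fin (n+2) :=
  if h : i.val < n then (T.parent ⟨i.val, h⟩).castSucc else v.castSucc

/-- attach a new maximal vertex below `v` -/
noncomputable def attach (T : Inc12Tree n) (v : Fin (n+1)) (hv : childCount T v ≤ 1) :
    Inc12Tree (n+1) where
  parent := attachParent T v
  inc := by
    intro i
    simp only [attachParent]
    by_cases h : i.val < n
    · rw [dif_pos h]
      simpa using T.inc ⟨i.val, h⟩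
    · rw [dif_neg h]
      have hi : i.val = n := by have := i.isLt; omega
      have := v.isLt
      simp only [Fin.coe_castSucc]
      omega
  deg := by
    intro w
    have key : (univ.filter fun i : Fin (n+1) => attachParent T v i = w).card
        = (univ.filter (fun i : Fin n => (T.parent i).castSucc = w)).card
          + (if v.castSucc = w then 1 else 0) := by
      rw [card_filter_succ (fun i : Fin (n+1) => attachParent T v i = w)]
      congr 1
      · congr 1
        ext i
        simp only [mem_filter, mem_univ, true_and, attachParent, Fin.coe_castSucc]
        rw [dif_pos i.isLt]
      · simp only [attachParent, Fin.val_last]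
        rw [dif_neg (by omega)]
    rw [key]
    rcases eq_or_ne w (v.castSucc) with rfl | hw
    · have h2 : (univ.filter (fun i : Fin n => (T.parent i).castSucc = v.castSucc)).card
          = childCount T v := by
        rw [childCount]; congr 1; ext i
        simp [Fin.castSucc_inj]
      rw [h2, if_pos rfl]
      omega
    · have h2 : (univ.filter (fun i : Fin n => (T.parent i).castSucc = w)).card ≤ 2 := by
        rcases Fin.eq_castSucc_or_eq_last w with ⟨w', rfl⟩ | rfl
        · have h3 : (univ.filter (fun i : Fin n => (T.parent i).castSucc = w'.castSucc)).card
              = childCount T w' := by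
            rw [childCount]; congr 1; ext i; simp [Fin.castSucc_inj]
          rw [h3]; exact T.deg w'
        · have : (univ.filter (fun i : Fin n => (T.parent i).castSucc = Fin.last (n+1))).card = 0 := by
            rw [Finset.card_eq_zero, Finset.filter_eq_empty_iff]
            intro i _
            exact (Fin.castSucc_lt_last _).ne
          rw [this]; omega
      rw [if_neg (fun h => hw h.symm)]
      omega

lemma attach_parent_lt (T : Inc12Tree n) (v : Fin (n+1)) (hv : childCount T v ≤ 1)
    (i : Fin (n+1)) (h : i.val < n) :
    (attach T v hv).parent i = (T.parent ⟨i.val, h⟩).castSucc := by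
  simp only [attach, attachParent]; rw [dif_pos h]

lemma attach_parent_last (T : Inc12Tree n) (v : Fin (n+1)) (hv : childCount T v ≤ 1)
    (i : Fin (n+1)) (h : ¬ i.val < n) :
    (attach T v hv).parent i = v.castSucc := by
  simp only [attach, attachParent]; rw [dif_neg h]


lemma attach_childCount (T : Inc12Tree n) (v : Fin (n+1)) (hv : childCount T v ≤ 1)
    (w : Fin (n+1)) :
    childCount (attach T v hv) w.castSucc = childCount T w + (if v = w then 1 else 0) := by
  rw [childCount, card_filter_succ (fun i : Fin (n+1) => (attach T v hv).parent i = w.castSucc)]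
  congr 1
  · rw [childCount]
    congr 1
    ext i
    simp only [mem_filter, mem_univ, true_and]
    rw [attach_parent_lt T v hv i.castSucc i.isLt]
    simp only [Fin.castSucc_inj]
    have hi : (⟨(i.castSucc : Fin (n+1)).val, i.isLt⟩ : Fin n) = i := by
      simp [Fin.ext_iff]
    rw [hi]
  · rw [attach_parent_last T v hv (Fin.last n) (by simp)]
    simp [Fin.castSucc_inj, eq_comm]

lemma attach_childCount_last (T : Inc12Tree n) (v : Fin (n+1)) (hv : childCount T v ≤ 1) :
    childCount (attach T v hv) (Fin.last (n+1)) = 0 := by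
  rw [childCount, Finset.card_eq_zero, Finset.filter_eq_empty_iff]
  intro i _
  rcases Nat.lt_or_ge i.val n with h | h
  · rw [attach_parent_lt T v hv i h]
    exact (Fin.castSucc_lt_last _).ne
  · rw [attach_parent_last T v hv i (by omega)]
    exact (Fin.castSucc_lt_last _).ne

lemma isLeaf_attach_iff (T : Inc12Tree n) (v : Fin (n+1)) (hv : childCount T v ≤ 1)
    (w : Fin (n+1)) :
    IsLeaf (attach T v hv) w.castSucc ↔ (IsLeaf T w ∧ v ≠ w) := by
  rw [isLeaf_iff, isLeaf_iff, attach_childCount T v hv w]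
  split_ifs with h
  · simp [h]
  · simp [h]

lemma numLeaves_attach (T : Inc12Tree n) (v : Fin (n+1)) (hv : childCount T v ≤ 1) :
    (attach T v hv).numLeaves = T.numLeaves + (if IsLeaf T v then 0 else 1) := by
  rw [numLeaves_eq, numLeaves_eq,
    card_filter_succ (fun w : Fin (n+1+1) => IsLeaf (attach T v hv) w)]
  have hlast : IsLeaf (attach T v hv) (Fin.last (n+1)) := by
    rw [isLeaf_iff]; exact attach_childCount_last T v hv
  rw [if_pos hlast]
  have hmain : (@Finset.filter _
        (fun i : Fin (n+1) => IsLeaf (attach T v hv) i.castSucc) _ univ).card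
      = (univ.filter (fun w : Fin (n+1) => IsLeaf T w)).card - (if IsLeaf T v then 1 else 0) := by
    have he : (@Finset.filter _
        (fun i : Fin (n+1) => IsLeaf (attach T v hv) i.castSucc) _ univ)
        = (univ.filter (fun w : Fin (n+1) => IsLeaf T w)).erase v := by
      ext w
      simp only [Finset.mem_erase, mem_filter, mem_univ, true_and]
      rw [isLeaf_attach_iff T v hv w]
      constructor
      · rintro ⟨h1, h2⟩; exact ⟨fun hh => h2 hh.symm, h1⟩
      · rintro ⟨h1, h2⟩; exact ⟨h2, fun hh => h1 hh.symm⟩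
    rw [he]
    split_ifs with h
    · rw [Finset.card_erase_of_mem (by simp [h])]
    · rw [Finset.erase_eq_of_notMem (by simp [h])]
      omega
  rw [hmain]
  have hcard : (if IsLeaf T v then 1 else 0) ≤ (univ.filter (fun w : Fin (n+1) => IsLeaf T w)).card := by
    split_ifs with h
    · exact Finset.card_pos.2 ⟨v, by simp [h]⟩
    · omega
  split_ifs at * <;> omega

/-- detach the maximal vertex -/
noncomputable def detachTree (T : Inc12Tree (n+1)) : Inc12Tree n where
  parent := fun i => ⟨(T.parent i.castSucc).val, by
    have := T.inc i.castSucc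
    have := i.isLt
    simp only [Fin.coe_castSucc] at *
    omega⟩
  inc := by
    intro i
    have := T.inc i.castSucc
    simpa using this
  deg := by
    intro v
    have hd := T.deg v.castSucc
    have hle : (univ.filter fun i : Fin n =>
        (⟨(T.parent i.castSucc).val, by
          have h1 := T.inc i.castSucc
          have h2 := i.isLt
          simp only [Fin.coe_castSucc] at h1 ⊢
          omega⟩ : Fin (n+1)) = v).card
        ≤ (univ.filter fun i : Fin (n+1) => T.parent i = v.castSucc).card := by
      apply Finset.card_le_card_of_injOn (fun i => i.castSucc)
      · intro i hi
        simp only [Finset.mem_coe, mem_filter, mem_univ, true_and] at hi ⊢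
        rw [Fin.ext_iff] at hi
        simp only [Fin.val_mk] at hi
        rw [Fin.ext_iff, Fin.coe_castSucc]
        exact hi
      · intro a _ b _ h
        exact Fin.castSucc_injective n h
    exact hle.trans hd

noncomputable def detachVertex (T : Inc12Tree (n+1)) : Fin (n+1) :=
  ⟨(T.parent (Fin.last n)).val, by have := T.inc (Fin.last n); simpa using this⟩

lemma detach_childCount_le (T : Inc12Tree (n+1)) :
    childCount (detachTree T) (detachVertex T) ≤ 1 := by
  have hd := T.deg ((detachVertex T).castSucc)
  have hmem : Fin.last n ∈ univ.filter
      (fun i : Fin (n+1) => T.parent i = (detachVertex T).castSucc) := by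
    simp only [mem_filter, mem_univ, true_and]
    rw [Fin.ext_iff, Fin.coe_castSucc, detachVertex]
  have hle : childCount (detachTree T) (detachVertex T) + 1
      ≤ (univ.filter fun i : Fin (n+1) => T.parent i = (detachVertex T).castSucc).card := by
    rw [childCount]
    have : (univ.filter (fun i : Fin n =>
        (detachTree T).parent i = detachVertex T)).card
        ≤ ((univ.filter fun i : Fin (n+1) =>
            T.parent i = (detachVertex T).castSucc).erase (Fin.last n)).card := by
      apply Finset.card_le_card_of_injOn (fun i => i.castSucc)
      · intro i hi
        simp only [Finset.mem_coe, mem_filter, mem_univ, true_and, Finset.mem_erase] at hi ⊢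
        constructor
        · exact (Fin.castSucc_lt_last _).ne
        · rw [Fin.ext_iff] at hi ⊢
          simp only [detachTree, Fin.val_mk] at hi
          simpa using hi
      · intro a _ b _ h
        exact Fin.castSucc_injective n h
    have h2 := Finset.card_erase_add_one hmem
    omega
  omega

lemma detachTree_attach (T : Inc12Tree n) (v : Fin (n+1)) (hv : childCount T v ≤ 1) :
    detachTree (attach T v hv) = T := by
  apply tree_ext
  funext i
  have h1 : (detachTree (attach T v hv)).parent i
      = ⟨((attach T v hv).parent i.castSucc).val, by
          have := (attach T v hv).inc i.castSucc
          have := i.isLt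
          simp only [Fin.coe_castSucc] at *
          omega⟩ := rfl
  rw [h1]
  rw [Fin.ext_iff]
  simp only [Fin.val_mk]
  rw [attach_parent_lt T v hv i.castSucc i.isLt]
  simp only [Fin.coe_castSucc]

lemma detachVertex_attach (T : Inc12Tree n) (v : Fin (n+1)) (hv : childCount T v ≤ 1) :
    detachVertex (attach T v hv) = v := by
  rw [Fin.ext_iff, detachVertex]
  simp only [Fin.val_mk]
  rw [attach_parent_last T v hv (Fin.last n) (by simp)]
  simp

lemma attach_detach (T : Inc12Tree (n+1)) :
    attach (detachTree T) (detachVertex T) (detach_childCount_le T) = T := by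
  apply tree_ext
  funext i
  rcases Nat.lt_or_ge i.val n with h | h
  · rw [attach_parent_lt _ _ _ i h]
    have h1 : (detachTree T).parent ⟨i.val, h⟩
        = ⟨(T.parent (⟨i.val, h⟩ : Fin n).castSucc).val, by
            have := T.inc (⟨i.val, h⟩ : Fin n).castSucc
            simp only [Fin.coe_castSucc] at *
            omega⟩ := rfl
    rw [h1, Fin.ext_iff]
    simp only [Fin.coe_castSucc, Fin.val_mk]
    have he : ((⟨i.val, h⟩ : Fin n).castSucc) = i := by simp [Fin.ext_iff]
    rw [he]
  · have h' : ¬ i.val < n := by omega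
    rw [attach_parent_last _ _ _ i h']
    have hi : i = Fin.last n := by rw [Fin.ext_iff]; simp [Fin.last]; omega
    subst hi
    rw [Fin.ext_iff, Fin.coe_castSucc, detachVertex]



noncomputable def ins (p : Fin (n+1)) (τ : Equiv.Perm (Fin n)) : Equiv.Perm (Fin (n+1)) :=
  (finSuccEquiv' p).trans ((τ.optionCongr).trans (finSuccEquiv' (Fin.last n)).symm)

@[simp] lemma ins_self (p : Fin (n+1)) (τ : Equiv.Perm (Fin n)) : ins p τ p = Fin.last n := by
  simp [ins]

@[simp] lemma ins_succAbove (p : Fin (n+1)) (τ : Equiv.Perm (Fin n)) (j : Fin n) :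
    ins p τ (p.succAbove j) = (τ j).castSucc := by
  simp [ins, Fin.succAbove_last]

/-- descent at natural-number position -/
def descN {m : ℕ} (σ : Equiv.Perm (Fin m)) (i : ℕ) : Prop :=
  ∃ h : i + 1 < m, σ ⟨i + 1, h⟩ < σ ⟨i, by omega⟩

lemma descN_lt {m : ℕ} {σ : Equiv.Perm (Fin m)} {i : ℕ} (h : descN σ i) : i + 1 < m := h.1

open scoped Classical in
lemma numDescents_eq {m : ℕ} (σ : Equiv.Perm (Fin m)) :
    numDescents σ = ((Finset.range m).filter (descN σ)).card := by
  rw [numDescents]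
  apply Finset.card_bij (fun i _ => i.val)
  · intro a ha
    simp only [mem_filter, mem_univ, true_and, mem_range] at *
    exact ⟨a.isLt, ha⟩
  · intro a _ b _ h; exact Fin.val_injective h
  · intro b hb
    simp only [mem_filter, mem_range] at hb
    refine ⟨⟨b, hb.1⟩, ?_, rfl⟩
    simp only [mem_filter, mem_univ, true_and]
    obtain ⟨h, hh⟩ := hb.2
    exact ⟨h, hh⟩

lemma ins_apply_lt (p : Fin (n+1)) (τ : Equiv.Perm (Fin n)) {i : ℕ} (h : i < p.val) :
    ins p τ ⟨i, by omega⟩ = (τ ⟨i, by omega⟩).castSucc := by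
  have hin : i < n := by have := p.isLt; omega
  have : (⟨i, by omega⟩ : Fin (n+1)) = p.succAbove ⟨i, hin⟩ := by
    rw [Fin.succAbove_of_castSucc_lt]
    · rfl
    · rwa [Fin.lt_def]
  rw [this, ins_succAbove]

lemma ins_apply_gt (p : Fin (n+1)) (τ : Equiv.Perm (Fin n)) {i : ℕ} (h : p.val < i) (hin : i < n + 1) :
    ins p τ ⟨i, hin⟩ = (τ ⟨i - 1, by omega⟩).castSucc := by
  have : (⟨i, hin⟩ : Fin (n+1)) = p.succAbove ⟨i - 1, by omega⟩ := by
    rw [Fin.succAbove_of_le_castSucc]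
    · simp [Fin.succ]; omega
    · rw [Fin.le_def]; simp; omega
  rw [this, ins_succAbove]

lemma descN_ins_iff_lt (p : Fin (n+1)) (τ : Equiv.Perm (Fin n)) {i : ℕ} (h : i + 1 < p.val) :
    descN (ins p τ) i ↔ descN τ i := by
  have h1 : i < p.val := by omega
  have hn : i + 1 < n := by have := p.isLt; omega
  constructor
  · rintro ⟨hh, hd⟩
    rw [ins_apply_lt p τ h, ins_apply_lt p τ h1, Fin.castSucc_lt_castSucc_iff] at hd
    exact ⟨hn, hd⟩
  · rintro ⟨hh, hd⟩
    refine ⟨by omega, ?_⟩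
    rw [ins_apply_lt p τ h, ins_apply_lt p τ h1, Fin.castSucc_lt_castSucc_iff]
    exact hd

lemma descN_ins_not_eq (p : Fin (n+1)) (τ : Equiv.Perm (Fin n)) {i : ℕ} (h : i + 1 = p.val) :
    ¬ descN (ins p τ) i := by
  rintro ⟨hh, hd⟩
  have : (⟨i + 1, hh⟩ : Fin (n+1)) = p := by rw [Fin.ext_iff]; exact h
  rw [this, ins_self] at hd
  rw [ins_apply_lt p τ (by omega)] at hd
  exact absurd hd (Fin.not_lt.2 (Fin.le_last _))

lemma descN_ins_eq (p : Fin (n+1)) (τ : Equiv.Perm (Fin n)) (h : p.val < n) :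
    descN (ins p τ) p.val := by
  refine ⟨by omega, ?_⟩
  have : (⟨p.val, by omega⟩ : Fin (n+1)) = p := by rw [Fin.ext_iff]
  rw [this, ins_self, ins_apply_gt p τ (by omega) (by omega)]
  exact Fin.castSucc_lt_last _

lemma descN_ins_iff_gt (p : Fin (n+1)) (τ : Equiv.Perm (Fin n)) {i : ℕ} (h : p.val < i) :
    descN (ins p τ) i ↔ descN τ (i - 1) := by
  constructor
  · rintro ⟨hh, hd⟩
    rw [ins_apply_gt p τ (by omega) (by omega), ins_apply_gt p τ (by omega) (by omega),
      Fin.castSucc_lt_castSucc_iff] at hd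
    have e1 : i - 1 + 1 = i := by omega
    have e2 : i + 1 - 1 = i := by omega
    refine ⟨by omega, ?_⟩
    simp only [e1, e2] at hd ⊢
    exact hd
  · rintro ⟨hh, hd⟩
    refine ⟨by omega, ?_⟩
    rw [ins_apply_gt p τ (by omega) (by omega), ins_apply_gt p τ (by omega) (by omega),
      Fin.castSucc_lt_castSucc_iff]
    have e1 : i - 1 + 1 = i := by omega
    have e2 : i + 1 - 1 = i := by omega
    simp only [e1, e2] at hd ⊢
    exact hd



lemma numDescents_ins (p : Fin (n+1)) (τ : Equiv.Perm (Fin n)) :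
    numDescents (ins p τ) + (if 0 < p.val ∧ descN τ (p.val - 1) then 1 else 0)
      = numDescents τ + (if p.val < n then 1 else 0) := by
  rw [numDescents_eq, numDescents_eq]
  set σ := ins p τ with hσ
  set S := (Finset.range (n+1)).filter (descN σ) with hS
  set T := (Finset.range n).filter (descN τ) with hT
  have hsplitS : (S.filter (fun i => i = p.val)).card + (S.filter (fun i => ¬ i = p.val)).card
      = S.card := Finset.card_filter_add_card_filter_not _
  have hsplitT : (T.filter (fun j => j + 1 = p.val)).card + (T.filter (fun j => ¬ j + 1 = p.val)).card
      = T.card := Finset.card_filter_add_card_filter_not _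
  have h1 : (S.filter (fun i => i = p.val)).card = (if p.val < n then 1 else 0) := by
    split_ifs with h
    · rw [Finset.card_eq_one]
      refine ⟨p.val, ?_⟩
      ext i
      simp only [hS, Finset.mem_filter, Finset.mem_range, Finset.mem_singleton]
      constructor
      · rintro ⟨⟨-, -⟩, h2⟩; exact h2
      · rintro rfl; exact ⟨⟨by omega, descN_ins_eq p τ h⟩, rfl⟩
    · rw [Finset.card_eq_zero]
      ext i
      simp only [hS, Finset.mem_filter, Finset.mem_range, Finset.notMem_empty, iff_false]
      rintro ⟨⟨-, hd⟩, rfl⟩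
      exact h (by have := descN_lt hd; omega)
  have h2 : (T.filter (fun j => j + 1 = p.val)).card
      = (if 0 < p.val ∧ descN τ (p.val - 1) then 1 else 0) := by
    split_ifs with h
    · rw [Finset.card_eq_one]
      refine ⟨p.val - 1, ?_⟩
      ext j
      simp only [hT, Finset.mem_filter, Finset.mem_range, Finset.mem_singleton]
      constructor
      · rintro ⟨-, h3⟩; omega
      · rintro rfl
        refine ⟨⟨by have := descN_lt h.2; omega, h.2⟩, by omega⟩
    · rw [Finset.card_eq_zero]
      ext j
      simp only [hT, Finset.mem_filter, Finset.mem_range, Finset.notMem_empty, iff_false]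
      rintro ⟨⟨-, hd⟩, hj⟩
      refine h ⟨by omega, ?_⟩
      have hj' : p.val - 1 = j := by omega
      rw [hj']; exact hd
  have h3 : (S.filter (fun i => ¬ i = p.val)).card
      = (T.filter (fun j => ¬ j + 1 = p.val)).card := by
    apply Finset.card_bij' (fun i _ => if i < p.val then i else i - 1)
      (fun j _ => if j < p.val then j else j + 1)
    · intro i hi
      simp only [hS, Finset.mem_filter, Finset.mem_range] at hi
      obtain ⟨⟨-, hd⟩, hne⟩ := hi
      simp only [hT, Finset.mem_filter, Finset.mem_range]
      rcases lt_trichotomy i p.val with h | h | h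
      · have h4 : i + 1 < p.val := by
          rcases Nat.lt_or_ge (i+1) p.val with h' | h'
          · exact h'
          · exfalso; exact descN_ins_not_eq p τ (by omega) hd
        rw [if_pos h]
        have := (descN_ins_iff_lt p τ h4).1 hd
        exact ⟨⟨by have := descN_lt this; omega, this⟩, by omega⟩
      · exact absurd h hne
      · rw [if_neg (by omega)]
        have := (descN_ins_iff_gt p τ h).1 hd
        exact ⟨⟨by have := descN_lt this; omega, this⟩, by omega⟩
    · intro j hj
      simp only [hT, Finset.mem_filter, Finset.mem_range] at hj
      obtain ⟨⟨hjn, hd⟩, hne⟩ := hj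
      simp only [hS, Finset.mem_filter, Finset.mem_range]
      rcases Nat.lt_or_ge j p.val with h | h
      · have h4 : j + 1 < p.val := by omega
        rw [if_pos h]
        exact ⟨⟨by omega, (descN_ins_iff_lt p τ h4).2 hd⟩, by omega⟩
      · rw [if_neg (by omega)]
        refine ⟨⟨by omega, ?_⟩, by omega⟩
        rw [descN_ins_iff_gt p τ (by omega)]
        simpa using hd
    · intro i hi
      simp only [hS, Finset.mem_filter, Finset.mem_range] at hi
      obtain ⟨-, hne⟩ := hi
      rcases Nat.lt_or_ge i p.val with h | h
      · rw [if_pos h, if_pos h]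
      · rw [if_neg (show ¬ i < p.val by omega), if_neg (show ¬ i - 1 < p.val by omega)]
        omega
    · intro j hj
      simp only [hT, Finset.mem_filter, Finset.mem_range] at hj
      obtain ⟨-, hne⟩ := hj
      rcases Nat.lt_or_ge j p.val with h | h
      · rw [if_pos h, if_pos h]
      · rw [if_neg (show ¬ j < p.val by omega), if_neg (show ¬ j + 1 < p.val by omega)]
        omega
  rw [← hsplitS, ← hsplitT, h1, h2, h3]
  omega


def Bad {n : ℕ} (σ : Equiv.Perm (Fin n)) (k : ℕ) : Prop :=
  ∃ i j l : Fin n, i < j ∧ j < l ∧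
    (σ i).val < k ∧ (σ j).val < k ∧ (σ l).val < k ∧
    σ l < σ j ∧ σ j < σ i ∧
    (∀ m : Fin n, i < m → m < j → k ≤ (σ m).val) ∧
    (∀ m : Fin n, j < m → m < l → k ≤ (σ m).val)

lemma bad_ins_iff (p : Fin (n+1)) (τ : Equiv.Perm (Fin n)) {k : ℕ} (hk : k ≤ n) :
    Bad (ins p τ) k ↔ Bad τ k := by
  constructor
  · rintro ⟨i, j, l, hij, hjl, vi, vj, vl, hlj, hji, g1, g2⟩
    have hne : ∀ x : Fin (n+1), ((ins p τ) x).val < k → x ≠ p := by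
      intro x hx hxp
      rw [hxp, ins_self] at hx
      simp [Fin.last] at hx; omega
    obtain ⟨i', rfl⟩ := Fin.exists_succAbove_eq (hne i vi)
    obtain ⟨j', rfl⟩ := Fin.exists_succAbove_eq (hne j vj)
    obtain ⟨l', rfl⟩ := Fin.exists_succAbove_eq (hne l vl)
    rw [Fin.succAbove_lt_succAbove_iff] at hij hjl
    simp only [ins_succAbove, Fin.castSucc_lt_castSucc_iff, Fin.coe_castSucc] at vi vj vl hlj hji g1 g2
    refine ⟨i', j', l', hij, hjl, vi, vj, vl, hlj, hji, ?_, ?_⟩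
    · intro m hm1 hm2
      have := g1 (p.succAbove m) (Fin.succAbove_lt_succAbove_iff.2 hm1)
        (Fin.succAbove_lt_succAbove_iff.2 hm2)
      simpa using this
    · intro m hm1 hm2
      have := g2 (p.succAbove m) (Fin.succAbove_lt_succAbove_iff.2 hm1)
        (Fin.succAbove_lt_succAbove_iff.2 hm2)
      simpa using this
  · rintro ⟨i, j, l, hij, hjl, vi, vj, vl, hlj, hji, g1, g2⟩
    refine ⟨p.succAbove i, p.succAbove j, p.succAbove l,
      Fin.succAbove_lt_succAbove_iff.2 hij, Fin.succAbove_lt_succAbove_iff.2 hjl,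
      by simpa using vi, by simpa using vj, by simpa using vl,
      by simpa using hlj, by simpa using hji, ?_, ?_⟩
    · intro m hm1 hm2
      rcases eq_or_ne m p with rfl | hmp
      · rw [ins_self]; simp [Fin.last]; omega
      · obtain ⟨m', rfl⟩ := Fin.exists_succAbove_eq hmp
        rw [Fin.succAbove_lt_succAbove_iff] at hm1 hm2
        simpa using g1 m' hm1 hm2
    · intro m hm1 hm2
      rcases eq_or_ne m p with rfl | hmp
      · rw [ins_self]; simp [Fin.last]; omega
      · obtain ⟨m', rfl⟩ := Fin.exists_succAbove_eq hmp
        rw [Fin.succAbove_lt_succAbove_iff] at hm1 hm2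
        simpa using g2 m' hm1 hm2


def DD {m : ℕ} (σ : Equiv.Perm (Fin m)) : Prop := ∃ i : ℕ, descN σ i ∧ descN σ (i + 1)

lemma bad_ge_iff {m : ℕ} {σ : Equiv.Perm (Fin m)} {k : ℕ} (hk : m ≤ k) : Bad σ k ↔ DD σ := by
  constructor
  · rintro ⟨i, j, l, hij, hjl, -, -, -, hlj, hji, g1, g2⟩
    have hj : j.val = i.val + 1 := by
      by_contra h
      have h1 : i.val + 1 < j.val := by have := Fin.lt_def.mp hij; omega
      have hlt : i.val + 1 < m := by omega
      have hv := g1 ⟨i.val + 1, hlt⟩ (by rw [Fin.lt_def]; simp) (by rw [Fin.lt_def]; simpa)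
      have hv2 := (σ ⟨i.val + 1, hlt⟩).isLt; omega
    have hl : l.val = j.val + 1 := by
      by_contra h
      have h1 : j.val + 1 < l.val := by have := Fin.lt_def.mp hjl; omega
      have hlt : j.val + 1 < m := by omega
      have hv := g2 ⟨j.val + 1, hlt⟩ (by rw [Fin.lt_def]; simp) (by rw [Fin.lt_def]; simpa)
      have hv2 := (σ ⟨j.val + 1, hlt⟩).isLt; omega
    refine ⟨i.val, ⟨by omega, ?_⟩, ⟨by omega, ?_⟩⟩
    · have : (⟨i.val + 1, by omega⟩ : Fin m) = j := by simp only [Fin.ext_iff, Fin.val_mk]; omega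
      rw [this]
      have : (⟨i.val, by omega⟩ : Fin m) = i := by simp only [Fin.ext_iff, Fin.val_mk]
      rw [this]; exact hji
    · have e1 : (⟨i.val + 1 + 1, by omega⟩ : Fin m) = l := by simp only [Fin.ext_iff, Fin.val_mk]; omega
      have e2 : (⟨i.val + 1, by omega⟩ : Fin m) = j := by simp only [Fin.ext_iff, Fin.val_mk]; omega
      rw [e1, e2]; exact hlj
  · rintro ⟨i, ⟨h1, d1⟩, ⟨h2, d2⟩⟩
    refine ⟨⟨i, by omega⟩, ⟨i + 1, by omega⟩, ⟨i + 1 + 1, h2⟩,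
      by rw [Fin.lt_def]; simp, by rw [Fin.lt_def]; simp,
      (Fin.is_lt _).trans_le hk, (Fin.is_lt _).trans_le hk, (Fin.is_lt _).trans_le hk,
      d2, d1, ?_, ?_⟩
    · intro x hx1 hx2
      rw [Fin.lt_def] at hx1 hx2
      simp only [Fin.val_mk] at *
      omega
    · intro x hx1 hx2
      rw [Fin.lt_def] at hx1 hx2
      simp only [Fin.val_mk] at *
      omega

lemma dd_ins_iff (p : Fin (n+1)) (τ : Equiv.Perm (Fin n)) (hdd : ¬ DD τ) :
    DD (ins p τ) ↔ descN τ p.val := by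
  constructor
  · rintro ⟨i, d1, d2⟩
    rcases lt_trichotomy (i + 2) p.val with h | h | h
    · exact absurd ⟨i, (descN_ins_iff_lt p τ (by omega)).1 d1,
        (descN_ins_iff_lt p τ (by omega)).1 d2⟩ hdd
    · exact absurd d2 (descN_ins_not_eq p τ (by omega))
    · rcases lt_trichotomy (i + 1) p.val with h' | h' | h'
      · omega
      · exact absurd d1 (descN_ins_not_eq p τ h')
      · rcases lt_trichotomy i p.val with h'' | h'' | h''
        · -- i < p.val < i + 1 impossible unless p.val = i ... p.val ≤ i from h'
          omega
        · -- i = p.val : descN σ (p.val + 1) ↔ descN τ p.val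
          have := (descN_ins_iff_gt p τ (by omega)).1 d2
          simpa [h''] using this
        · exact absurd ⟨i - 1, by simpa using (descN_ins_iff_gt p τ h'').1 d1,
            by have := (descN_ins_iff_gt p τ (by omega)).1 d2
               have e : i + 1 - 1 = i - 1 + 1 := by omega
               rwa [e] at this⟩ hdd
  · intro hd
    have hp : p.val < n := by have := descN_lt hd; omega
    refine ⟨p.val, descN_ins_eq p τ hp, ?_⟩
    rw [descN_ins_iff_gt p τ (by omega)]
    simpa using hd

def Valid (p : Fin (n+1)) (τ : Equiv.Perm (Fin n)) : Prop := ¬ descN τ p.val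

def Neutral (p : Fin (n+1)) (τ : Equiv.Perm (Fin n)) : Prop :=
  p.val = n ∨ (0 < p.val ∧ descN τ (p.val - 1))

lemma simsun_iff_bad {m : ℕ} {σ : Equiv.Perm (Fin m)} : Simsun σ ↔ ∀ k, ¬ Bad σ k := Iff.rfl

lemma not_dd_of_simsun {m : ℕ} {σ : Equiv.Perm (Fin m)} (h : Simsun σ) : ¬ DD σ := by
  intro hdd
  exact (simsun_iff_bad.1 h m) ((bad_ge_iff le_rfl).2 hdd)

lemma simsun_ins_iff (p : Fin (n+1)) (τ : Equiv.Perm (Fin n)) :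
    Simsun (ins p τ) ↔ Simsun τ ∧ Valid p τ := by
  constructor
  · intro hσ
    have hτ : Simsun τ := by
      intro k
      rcases le_or_gt k n with hk | hk
      · intro hb
        exact hσ k ((bad_ins_iff p τ hk).2 hb)
      · intro hb
        have : DD τ := (bad_ge_iff (by omega)).1 hb
        exact hσ n ((bad_ins_iff p τ le_rfl).2 ((bad_ge_iff le_rfl).2 this))
    refine ⟨hτ, ?_⟩
    intro hd
    have hp : p.val < n := by have := descN_lt hd; omega
    have : DD (ins p τ) := ⟨p.val, descN_ins_eq p τ hp,
      by rw [descN_ins_iff_gt p τ (by omega)]; simpa using hd⟩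
    exact hσ (n+1) ((bad_ge_iff le_rfl).2 this)
  · rintro ⟨hτ, hv⟩
    have hdd : ¬ DD τ := not_dd_of_simsun hτ
    intro k
    rcases le_or_gt k n with hk | hk
    · intro hb
      exact hτ k ((bad_ins_iff p τ hk).1 hb)
    · intro hb
      have : DD (ins p τ) := (bad_ge_iff (by omega)).1 hb
      exact hv ((dd_ins_iff p τ hdd).1 this)



/-- The insertion map as a bijection on pairs. -/
lemma ins_bijective :
    Function.Bijective (fun x : Fin (n+1) × Equiv.Perm (Fin n) => ins x.1 x.2) := by
  constructor
  · rintro ⟨p, τ⟩ ⟨p', τ'⟩ h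
    simp only at h
    have hp : p = p' := by
      have h1 : ins p τ p = Fin.last n := ins_self p τ
      have h2 : ins p' τ' p' = Fin.last n := ins_self p' τ'
      rw [h] at h1
      exact (ins p' τ').injective (h1.trans h2.symm)
    subst hp
    have hτ : τ = τ' := by
      apply Equiv.ext
      intro j
      have := congrArg (fun f : Equiv.Perm (Fin (n+1)) => f (p.succAbove j)) h
      simp only [ins_succAbove] at this
      exact Fin.castSucc_injective n this
    rw [hτ]
  · intro σ
    set p := σ.symm (Fin.last n) with hp
    have hσp : σ p = Fin.last n := by rw [hp]; simp
    have hne : ∀ j : Fin n, σ (p.succAbove j) ≠ Fin.last n := by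
      intro j h
      have : p.succAbove j = p := by
        apply σ.injective; rw [h, hσp]
      exact Fin.succAbove_ne p j this
    have hlt : ∀ j : Fin n, σ (p.succAbove j) < Fin.last n :=
      fun j => lt_of_le_of_ne (Fin.le_last _) (hne j)
    set f : Fin n → Fin n := fun j => (σ (p.succAbove j)).castPred (hne j) with hf
    have hfinj : Function.Injective f := by
      intro a b hab
      rw [hf] at hab
      simp only at hab
      have := congrArg Fin.castSucc hab
      rw [Fin.castSucc_castPred, Fin.castSucc_castPred] at this
      exact (Fin.succAbove_right_injective (p := p)) (σ.injective this)
    obtain ⟨τ, hτ⟩ : ∃ τ : Equiv.Perm (Fin n), ∀ j, τ j = f j :=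
      ⟨Equiv.ofBijective f ((Finite.injective_iff_bijective).1 hfinj), fun j => rfl⟩
    refine ⟨⟨p, τ⟩, ?_⟩
    apply Equiv.ext
    intro x
    rcases eq_or_ne x p with rfl | hx
    · simp only [ins_self, hσp]
    · obtain ⟨j, rfl⟩ := Fin.exists_succAbove_eq hx
      simp only [ins_succAbove, hτ, hf]
      rw [Fin.castSucc_castPred]

/-- slots counting: invalid slots are exactly descents -/
lemma card_invalid (τ : Equiv.Perm (Fin n)) :
    (univ.filter (fun p : Fin (n+1) => ¬ Valid p τ)).card = numDescents τ := by
  rw [numDescents_eq]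
  apply Finset.card_bij (fun p _ => p.val)
  · intro p hp
    simp only [mem_filter, mem_univ, true_and, Valid, not_not] at hp
    simp only [mem_filter, mem_range]
    exact ⟨by have := descN_lt hp; omega, hp⟩
  · intro a _ b _ h; exact Fin.val_injective h
  · intro j hj
    simp only [mem_filter, mem_range] at hj
    refine ⟨⟨j, by omega⟩, ?_, rfl⟩
    simp only [mem_filter, mem_univ, true_and, Valid, not_not]
    exact hj.2

lemma card_valid_neutral (τ : Equiv.Perm (Fin n)) (hdd : ¬ DD τ) :
    (univ.filter (fun p : Fin (n+1) => Valid p τ ∧ Neutral p τ)).card = numDescents τ + 1 := by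
  rw [numDescents_eq]
  have hlast : (Fin.last n) ∈ univ.filter (fun p : Fin (n+1) => Valid p τ ∧ Neutral p τ) := by
    simp only [mem_filter, mem_univ, true_and]
    constructor
    · intro hd; have := descN_lt hd; simp at this
    · left; rfl
  rw [← Finset.card_erase_add_one hlast]
  congr 1
  apply Finset.card_bij (fun p _ => p.val - 1)
  · intro p hp
    simp only [Finset.mem_erase, mem_filter, mem_univ, true_and] at hp
    obtain ⟨hne, hv, hn⟩ := hp
    have hpn : p.val ≠ n := fun h => hne (by rw [Fin.ext_iff]; simpa [Fin.last])
    rcases hn with h | ⟨h0, hd⟩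
    · exact absurd h hpn
    · simp only [mem_filter, mem_range]
      exact ⟨by have := descN_lt hd; omega, hd⟩
  · intro a ha b hb h
    simp only [Finset.mem_erase, mem_filter, mem_univ, true_and] at ha hb
    have ha0 : 0 < a.val := by
      rcases ha.2.2 with h' | ⟨h0, -⟩
      · exact absurd (by rw [Fin.ext_iff]; simpa [Fin.last]) ha.1
      · exact h0
    have hb0 : 0 < b.val := by
      rcases hb.2.2 with h' | ⟨h0, -⟩
      · exact absurd (by rw [Fin.ext_iff]; simpa [Fin.last]) hb.1
      · exact h0
    rw [Fin.ext_iff]; omega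
  · intro j hj
    simp only [mem_filter, mem_range] at hj
    obtain ⟨hjn, hd⟩ := hj
    refine ⟨⟨j + 1, by omega⟩, ?_, by simp⟩
    simp only [Finset.mem_erase, mem_filter, mem_univ, true_and]
    have hjn2 := descN_lt hd
    refine ⟨?_, ?_, ?_⟩
    · simp only [ne_eq, Fin.ext_iff, Fin.val_last, Fin.val_mk]; omega
    · intro hd2
      exact hdd ⟨j, hd, by simpa using hd2⟩
    · right
      refine ⟨?_, ?_⟩
      · simp only [Fin.val_mk]; omega
      · simp only [Fin.val_mk]
        simpa using hd


lemma numDescents_ins_neutral (p : Fin (n+1)) (τ : Equiv.Perm (Fin n)) (h : Neutral p τ) :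
    numDescents (ins p τ) = numDescents τ := by
  have key := numDescents_ins p τ
  rcases h with h | h
  · rw [if_neg (by rintro ⟨h1, h2⟩; have := h2.1; omega), if_neg (by omega)] at key
    omega
  · have hlt : p.val < n := by have := h.2.1; omega
    rw [if_pos h, if_pos hlt] at key
    omega

lemma numDescents_ins_not_neutral (p : Fin (n+1)) (τ : Equiv.Perm (Fin n)) (h : ¬ Neutral p τ) :
    numDescents (ins p τ) = numDescents τ + 1 := by
  have key := numDescents_ins p τ
  rw [Neutral, not_or] at h
  have h1 := h.1
  have h2 := h.2
  rw [if_neg (by tauto), if_pos (by have := p.isLt; omega)] at key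
  omega

lemma card_valid_add (τ : Equiv.Perm (Fin n)) (hdd : ¬ DD τ) :
    (univ.filter (fun p : Fin (n+1) => Valid p τ ∧ ¬ Neutral p τ)).card
      + 2 * numDescents τ + 1 = n + 1 := by
  have h1 : (univ.filter (fun p : Fin (n+1) => Valid p τ)).card
      + (univ.filter (fun p : Fin (n+1) => ¬ Valid p τ)).card = n + 1 := by
    have := Finset.card_filter_add_card_filter_not
      (s := (univ : Finset (Fin (n+1)))) (p := fun p => Valid p τ)
    simpa using this
  have h2 : (univ.filter (fun p : Fin (n+1) => Valid p τ ∧ Neutral p τ)).card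
      + (univ.filter (fun p : Fin (n+1) => Valid p τ ∧ ¬ Neutral p τ)).card
      = (univ.filter (fun p : Fin (n+1) => Valid p τ)).card := by
    have := Finset.card_filter_add_card_filter_not
      (s := univ.filter (fun p : Fin (n+1) => Valid p τ)) (p := fun p => Neutral p τ)
    rwa [Finset.filter_filter, Finset.filter_filter] at this
  rw [card_invalid τ] at h1
  rw [card_valid_neutral τ hdd] at h2
  omega

/-- finiteness of trees -/
noncomputable instance : Fintype (Inc12Tree n) :=
  Fintype.ofInjective (fun T => T.parent) (fun _ _ h => tree_ext h)

-- helper equivs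
def sigmaSubtypeEquiv {A : Type*} {S : A → Type*} (Q : (Σ a, S a) → Prop) :
    {x : Σ a, S a // Q x} ≃ Σ a, {s : S a // Q ⟨a, s⟩} where
  toFun x := ⟨x.val.1, ⟨x.val.2, x.prop⟩⟩
  invFun y := ⟨⟨y.1, y.2.val⟩, y.2.prop⟩
  left_inv x := rfl
  right_inv y := rfl

def sigmaBaseCondEquiv {A : Type*} {S : A → Type*} (P : ∀ a, S a → Prop) (B : A → Prop) :
    (Σ a : A, {s : S a // P a s ∧ B a}) ≃ Σ a : {a // B a}, {s : S a.val // P a.val s} where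
  toFun x := ⟨⟨x.1, x.2.prop.2⟩, ⟨x.2.val, x.2.prop.1⟩⟩
  invFun y := ⟨y.1.val, ⟨y.2.val, y.2.prop, y.1.prop⟩⟩
  left_inv x := rfl
  right_inv y := rfl

noncomputable def subtypeSplitEquiv {A : Type*} (P C : A → Prop) :
    {x : A // P x} ≃ {x : A // P x ∧ C x} ⊕ {x : A // P x ∧ ¬ C x} :=
  ((Equiv.sumCompl (fun s : {x : A // P x} => C s.val)).symm).trans
    (Equiv.sumCongr (subtypeSubtypeEquivSubtypeInter P C)
      (subtypeSubtypeEquivSubtypeInter P (fun a => ¬ C a)))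

/-- tree decomposition equiv -/
noncomputable def treeEquiv : (Σ T : Inc12Tree n, {v : Fin (n+1) // childCount T v ≤ 1})
    ≃ Inc12Tree (n+1) where
  toFun x := attach x.1 x.2.val x.2.prop
  invFun T := ⟨detachTree T, detachVertex T, detach_childCount_le T⟩
  left_inv := by
    rintro ⟨T, v, hv⟩
    have h1 := detachTree_attach T v hv
    have h2 := detachVertex_attach T v hv
    exact Sigma.subtype_ext h1 h2
  right_inv T := attach_detach T

/-- permutation decomposition equiv -/
noncomputable def permEquiv :
    (Σ τ : {τ : Equiv.Perm (Fin n) // Simsun τ}, {p : Fin (n+1) // Valid p τ.val})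
      ≃ {σ : Equiv.Perm (Fin (n+1)) // Simsun σ} :=
  Equiv.ofBijective
    (fun x => ⟨ins x.2.val x.1.val, (simsun_ins_iff _ _).2 ⟨x.1.prop, x.2.prop⟩⟩)
    (by
      constructor
      · rintro ⟨⟨τ, hτ⟩, ⟨p, hp⟩⟩ ⟨⟨τ', hτ'⟩, ⟨p', hp'⟩⟩ h
        simp only [Subtype.mk.injEq] at h
        have := ins_bijective.1 (a₁ := (p, τ)) (a₂ := (p', τ')) h
        rw [Prod.ext_iff] at this
        obtain ⟨h1, h2⟩ := this
        simp only at h1 h2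
        subst h1; subst h2
        rfl
      · rintro ⟨σ, hσ⟩
        obtain ⟨⟨p, τ⟩, hx⟩ := ins_bijective.2 σ
        simp only at hx
        subst hx
        obtain ⟨h1, h2⟩ := (simsun_ins_iff p τ).1 hσ
        exact ⟨⟨⟨τ, h1⟩, ⟨p, h2⟩⟩, rfl⟩)

@[simp] lemma permEquiv_apply (x : Σ τ : {τ : Equiv.Perm (Fin n) // Simsun τ},
    {p : Fin (n+1) // Valid p τ.val}) :
    (permEquiv x).val = ins x.2.val x.1.val := rfl

@[simp] lemma treeEquiv_apply (x : Σ T : Inc12Tree n, {v : Fin (n+1) // childCount T v ≤ 1}) :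
    treeEquiv x = attach x.1 x.2.val x.2.prop := rfl

lemma numLeaves_pos (T : Inc12Tree n) : 0 < T.numLeaves := by
  rw [numLeaves_eq]
  apply Finset.card_pos.2
  refine ⟨Fin.last n, ?_⟩
  simp only [mem_filter, mem_univ, true_and]
  intro i h
  have h1 := T.inc i
  have h2 := i.isLt
  rw [Fin.ext_iff, Fin.val_last] at h
  omega

lemma card_leaf_subtype (T : Inc12Tree n) :
    Fintype.card {v : Fin (n+1) // IsLeaf T v} = T.numLeaves := by
  rw [numLeaves_eq, Fintype.card_subtype]

lemma card_onechild_subtype (T : Inc12Tree n) :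
    Fintype.card {v : Fin (n+1) // childCount T v ≤ 1 ∧ ¬ IsLeaf T v} + 2 * T.numLeaves
      = n + 2 := by
  rw [Fintype.card_subtype]
  exact tree_degree_count T

lemma card_vn_subtype (τ : Equiv.Perm (Fin n)) (hτ : Simsun τ) :
    Fintype.card {p : Fin (n+1) // Valid p τ ∧ Neutral p τ} = numDescents τ + 1 := by
  rw [Fintype.card_subtype]
  exact card_valid_neutral τ (not_dd_of_simsun hτ)

lemma card_va_subtype (τ : Equiv.Perm (Fin n)) (hτ : Simsun τ) :
    Fintype.card {p : Fin (n+1) // Valid p τ ∧ ¬ Neutral p τ} + 2 * numDescents τ + 1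
      = n + 1 := by
  rw [Fintype.card_subtype]
  exact card_valid_add τ (not_dd_of_simsun hτ)

lemma simsun_zero (σ : Equiv.Perm (Fin 0)) : Simsun σ := by
  rintro k ⟨i, -⟩
  exact i.elim0

lemma main_card : ∀ n : ℕ, ∀ c : ℕ, Nonempty
    ({T : Inc12Tree n // T.numLeaves = c}
      ≃ {σ : Equiv.Perm (Fin n) // Simsun σ ∧ numDescents σ + 1 = c}) := by
  intro n
  induction n with
  | zero =>
    intro c
    haveI hu1 : Unique (Inc12Tree 0) := {
      default := ⟨Fin.elim0, fun i => i.elim0, by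
        intro v
        have : (univ.filter fun i : Fin 0 => Fin.elim0 i = v) = ∅ := by
          apply Finset.filter_eq_empty_iff.2
          intro i _
          exact i.elim0
        rw [this]
        simp⟩
      uniq := fun T => (tree_ext (funext fun i => i.elim0)).symm }
    haveI hu2 : Unique (Equiv.Perm (Fin 0)) := {
      default := 1
      uniq := fun σ => Equiv.ext fun i => i.elim0 }
    have hl : ∀ T : Inc12Tree 0, T.numLeaves = 1 := by
      intro T
      rw [numLeaves_eq]
      rw [show (univ.filter fun v : Fin 1 => IsLeaf T v) = univ from ?_]
      · simp
      · apply Finset.filter_true_of_mem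
        intro v _ i
        exact i.elim0
    have hd : ∀ σ : Equiv.Perm (Fin 0), numDescents σ = 0 := by
      intro σ
      rw [numDescents]
      simp
    rcases eq_or_ne c 1 with rfl | hc
    · haveI i1 : Unique {T : Inc12Tree 0 // T.numLeaves = 1} :=
        { default := ⟨default, hl _⟩,
          uniq := fun x => Subtype.ext ((hu1.uniq x.val).trans (hu1.uniq _).symm) }
      haveI i2 : Unique {σ : Equiv.Perm (Fin 0) // Simsun σ ∧ numDescents σ + 1 = 1} :=
        { default := ⟨default, simsun_zero _, by rw [hd]⟩,
          uniq := fun x => Subtype.ext ((hu2.uniq x.val).trans (hu2.uniq _).symm) }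
      exact ⟨Equiv.ofUnique _ _⟩
    · haveI i1 : IsEmpty {T : Inc12Tree 0 // T.numLeaves = c} :=
        ⟨fun x => hc (by rw [← x.prop, hl x.val])⟩
      haveI i2 : IsEmpty {σ : Equiv.Perm (Fin 0) // Simsun σ ∧ numDescents σ + 1 = c} :=
        ⟨fun x => hc (by
          have h := x.prop.2
          rw [hd x.val] at h
          omega)⟩
      exact ⟨Equiv.equivOfIsEmpty _ _⟩
  | succ n IH =>
    intro c
    match c with
    | 0 =>
      haveI i1 : IsEmpty {T : Inc12Tree (n+1) // T.numLeaves = 0} :=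
        ⟨fun x => by have := numLeaves_pos x.val; have := x.prop; omega⟩
      haveI i2 : IsEmpty {σ : Equiv.Perm (Fin (n+1)) // Simsun σ ∧ numDescents σ + 1 = 0} :=
        ⟨fun x => by have := x.prop.2; omega⟩
      exact ⟨Equiv.equivOfIsEmpty _ _⟩
    | d + 1 =>
      -- IH equivs
      obtain ⟨e1⟩ := IH (d + 1)
      obtain ⟨e2⟩ := IH d
      -- massage e1 to target {σ // Simsun ∧ numDescents = d}
      have e1' : {T : Inc12Tree n // T.numLeaves = d + 1}
          ≃ {σ : Equiv.Perm (Fin n) // Simsun σ ∧ numDescents σ = d} :=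
        e1.trans (Equiv.subtypeEquivRight (fun σ => by
          constructor
          · rintro ⟨h1, h2⟩; exact ⟨h1, by omega⟩
          · rintro ⟨h1, h2⟩; exact ⟨h1, by omega⟩))
      -- LEFT side chain
      have L1 : {T : Inc12Tree (n+1) // T.numLeaves = d + 1}
          ≃ {x : Σ T : Inc12Tree n, {v : Fin (n+1) // childCount T v ≤ 1} //
              (treeEquiv x).numLeaves = d + 1} :=
        (Equiv.subtypeEquiv treeEquiv (fun x => Iff.rfl)).symm
      have L2 : {x : Σ T : Inc12Tree n, {v : Fin (n+1) // childCount T v ≤ 1} //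
              (treeEquiv x).numLeaves = d + 1}
          ≃ Σ T : Inc12Tree n, {vv : {v : Fin (n+1) // childCount T v ≤ 1} //
              (attach T vv.val vv.prop).numLeaves = d + 1} :=
        sigmaSubtypeEquiv _
      have L3 : ∀ T : Inc12Tree n,
          ({vv : {v : Fin (n+1) // childCount T v ≤ 1} //
              (attach T vv.val vv.prop).numLeaves = d + 1})
          ≃ ({v : Fin (n+1) // IsLeaf T v ∧ T.numLeaves = d + 1}
             ⊕ {v : Fin (n+1) // (childCount T v ≤ 1 ∧ ¬ IsLeaf T v) ∧ T.numLeaves = d}) := by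
        intro T
        refine Equiv.trans (Equiv.subtypeEquivRight (q := fun vv =>
            T.numLeaves + (if IsLeaf T vv.val then 0 else 1) = d + 1) (fun vv => by
          rw [numLeaves_attach T vv.val vv.prop])) ?_
        refine Equiv.trans (subtypeSubtypeEquivSubtypeInter
          (fun v : Fin (n+1) => childCount T v ≤ 1)
          (fun v : Fin (n+1) => T.numLeaves + (if IsLeaf T v then 0 else 1) = d + 1)) ?_
        refine Equiv.trans (subtypeSplitEquiv _ (fun v => IsLeaf T v)) ?_
        refine Equiv.sumCongr (Equiv.subtypeEquivRight (fun v => ?_))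
          (Equiv.subtypeEquivRight (fun v => ?_))
        · constructor
          · rintro ⟨⟨h1, h2⟩, h3⟩
            rw [if_pos h3] at h2
            exact ⟨h3, by omega⟩
          · rintro ⟨h1, h2⟩
            refine ⟨⟨by rw [isLeaf_iff] at h1; omega, by rw [if_pos h1]; omega⟩, h1⟩
        · constructor
          · rintro ⟨⟨h1, h2⟩, h3⟩
            rw [if_neg h3] at h2
            exact ⟨⟨h1, h3⟩, by omega⟩
          · rintro ⟨⟨h1, h3⟩, h2⟩
            exact ⟨⟨h1, by rw [if_neg h3]; omega⟩, h3⟩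
      have LHS : {T : Inc12Tree (n+1) // T.numLeaves = d + 1}
          ≃ ((Σ T : {T : Inc12Tree n // T.numLeaves = d + 1}, {v : Fin (n+1) // IsLeaf T.val v})
            ⊕ (Σ T : {T : Inc12Tree n // T.numLeaves = d},
                {v : Fin (n+1) // childCount T.val v ≤ 1 ∧ ¬ IsLeaf T.val v})) :=
        L1.trans (L2.trans ((Equiv.sigmaCongrRight L3).trans
          ((Equiv.sigmaSumDistrib _ _).trans
            (Equiv.sumCongr (sigmaBaseCondEquiv _ _) (sigmaBaseCondEquiv _ _)))))
      -- RIGHT side chain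
      have R3 : ∀ τ : {τ : Equiv.Perm (Fin n) // Simsun τ},
          ({pp : {p : Fin (n+1) // Valid p τ.val} // numDescents (ins pp.val τ.val) = d})
          ≃ ({p : Fin (n+1) // (Valid p τ.val ∧ Neutral p τ.val) ∧ numDescents τ.val = d}
             ⊕ {p : Fin (n+1) // (Valid p τ.val ∧ ¬ Neutral p τ.val)
                  ∧ numDescents τ.val + 1 = d}) := by
        intro τ
        refine Equiv.trans (subtypeSubtypeEquivSubtypeInter
          (fun p : Fin (n+1) => Valid p τ.val)
          (fun p : Fin (n+1) => numDescents (ins p τ.val) = d)) ?_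
        refine Equiv.trans (subtypeSplitEquiv _ (fun p => Neutral p τ.val)) ?_
        refine Equiv.sumCongr (Equiv.subtypeEquivRight (fun p => ?_))
          (Equiv.subtypeEquivRight (fun p => ?_))
        · constructor
          · rintro ⟨⟨h1, h2⟩, h3⟩
            rw [numDescents_ins_neutral p τ.val h3] at h2
            exact ⟨⟨h1, h3⟩, h2⟩
          · rintro ⟨⟨h1, h3⟩, h2⟩
            exact ⟨⟨h1, by rw [numDescents_ins_neutral p τ.val h3]; exact h2⟩, h3⟩
        · constructor
          · rintro ⟨⟨h1, h2⟩, h3⟩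
            rw [numDescents_ins_not_neutral p τ.val h3] at h2
            exact ⟨⟨h1, h3⟩, h2⟩
          · rintro ⟨⟨h1, h3⟩, h2⟩
            exact ⟨⟨h1, by rw [numDescents_ins_not_neutral p τ.val h3]; exact h2⟩, h3⟩
      have RHS : {σ : Equiv.Perm (Fin (n+1)) // Simsun σ ∧ numDescents σ + 1 = d + 1}
          ≃ ((Σ s : {τ : {τ : Equiv.Perm (Fin n) // Simsun τ} // numDescents τ.val = d},
                {p : Fin (n+1) // Valid p s.val.val ∧ Neutral p s.val.val})
            ⊕ (Σ s : {τ : {τ : Equiv.Perm (Fin n) // Simsun τ} // numDescents τ.val + 1 = d},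
                {p : Fin (n+1) // Valid p s.val.val ∧ ¬ Neutral p s.val.val})) := by
        refine Equiv.trans (Equiv.subtypeEquivRight (q := fun σ : Equiv.Perm (Fin (n+1)) =>
            Simsun σ ∧ numDescents σ = d) (fun σ => by
          constructor
          · rintro ⟨h1, h2⟩; exact ⟨h1, by omega⟩
          · rintro ⟨h1, h2⟩; exact ⟨h1, by omega⟩)) ?_
        refine Equiv.trans (subtypeSubtypeEquivSubtypeInter
          (fun σ : Equiv.Perm (Fin (n+1)) => Simsun σ)
          (fun σ => numDescents σ = d)).symm ?_
        refine Equiv.trans (Equiv.subtypeEquiv permEquiv (fun x => Iff.rfl)).symm ?_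
        refine Equiv.trans (sigmaSubtypeEquiv _) ?_
        refine Equiv.trans (Equiv.sigmaCongrRight R3) ?_
        exact (Equiv.sigmaSumDistrib _ _).trans
          (Equiv.sumCongr (sigmaBaseCondEquiv _ _) (sigmaBaseCondEquiv _ _))
      -- base equivs
      have eA : {T : Inc12Tree n // T.numLeaves = d + 1}
          ≃ {τ : {τ : Equiv.Perm (Fin n) // Simsun τ} // numDescents τ.val = d} :=
        e1'.trans (subtypeSubtypeEquivSubtypeInter
          (fun σ : Equiv.Perm (Fin n) => Simsun σ) (fun σ => numDescents σ = d)).symm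
      have eB : {T : Inc12Tree n // T.numLeaves = d}
          ≃ {τ : {τ : Equiv.Perm (Fin n) // Simsun τ} // numDescents τ.val + 1 = d} :=
        e2.trans (subtypeSubtypeEquivSubtypeInter
          (fun σ : Equiv.Perm (Fin n) => Simsun σ) (fun σ => numDescents σ + 1 = d)).symm
      have comp1 : (Σ T : {T : Inc12Tree n // T.numLeaves = d + 1},
            {v : Fin (n+1) // IsLeaf T.val v})
          ≃ (Σ s : {τ : {τ : Equiv.Perm (Fin n) // Simsun τ} // numDescents τ.val = d},
            {p : Fin (n+1) // Valid p s.val.val ∧ Neutral p s.val.val}) := by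
        refine Equiv.sigmaCongr eA (fun T => Fintype.equivOfCardEq ?_)
        have h1 := card_leaf_subtype T.val
        have h2 := card_vn_subtype (eA T).val.val (eA T).val.prop
        have h3 := (eA T).prop
        have h4 := T.prop
        omega
      have comp2 : (Σ T : {T : Inc12Tree n // T.numLeaves = d},
            {v : Fin (n+1) // childCount T.val v ≤ 1 ∧ ¬ IsLeaf T.val v})
          ≃ (Σ s : {τ : {τ : Equiv.Perm (Fin n) // Simsun τ} // numDescents τ.val + 1 = d},
            {p : Fin (n+1) // Valid p s.val.val ∧ ¬ Neutral p s.val.val}) := by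
        refine Equiv.sigmaCongr eB (fun T => Fintype.equivOfCardEq ?_)
        have h1 := card_onechild_subtype T.val
        have h2 := card_va_subtype (eB T).val.val (eB T).val.prop
        have h3 := (eB T).prop
        have h4 := T.prop
        omega
      exact ⟨LHS.trans ((Equiv.sumCongr comp1 comp2).trans RHS.symm)⟩

end SP

/-- There is a bijection between increasing 1-2 trees on `{0,…,n}` and simsun
permutations in `S_n`, carrying a tree with `k+1` leaves to a simsun
permutation with exactly `k` descents. -/
theorem inc12Tree_equiv_simsun (n : ℕ) :
    ∃ φ : Inc12Tree n ≃ {σ : Equiv.Perm (Fin n) // Simsun σ},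
      ∀ T : Inc12Tree n, T.numLeaves = numDescents (φ T).val + 1 := by
  have e : ∀ c : ℕ, {T : Inc12Tree n // T.numLeaves = c}
      ≃ {s : {σ : Equiv.Perm (Fin n) // Simsun σ} // numDescents s.val + 1 = c} := by
    intro c
    refine (Classical.choice (SP.main_card n c)).trans ?_
    exact (Equiv.subtypeSubtypeEquivSubtypeInter
      (fun σ : Equiv.Perm (Fin n) => Simsun σ) (fun σ => numDescents σ + 1 = c)).symm
  refine ⟨Equiv.ofFiberEquiv (f := Inc12Tree.numLeaves)
    (g := fun s => numDescents s.val + 1) e, ?_⟩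
  intro T
  exact (Equiv.ofFiberEquiv_map e T).symm
end

section
/- The number of increasing 1-2 trees on n+1 unlabeled vertices, counted as ordered trees (the order of subtrees matters), equals the n-th Motzkin number M_n. -/
/-- Ordered (plane) 1-2 trees: every vertex has at most two children and the
left-right order of children matters. -/
inductive OTree where
  | leaf : OTree
  | one : OTree → OTree
  | two : OTree → OTree → OTree

def OTree.size : OTree → ℕ
  | .leaf => 1
  | .one t => 1 + t.size
  | .two l r => 1 + l.size + r.size

namespace MotzkinAux

lemma prefix_append_cases {α : Type*} {t A C : List α} (h : t <+: A ++ C) :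
    t <+: A ∨ ∃ u, t = A ++ u ∧ u <+: C := by
  obtain ⟨s, hs⟩ := h
  rcases List.append_eq_append_iff.mp hs with ⟨a', h1, _⟩ | ⟨c', h1, h2⟩
  · exact Or.inl ⟨a', h1.symm⟩
  · exact Or.inr ⟨c', h1, ⟨s, h2.symm⟩⟩

def encode : OTree → List ℤ
  | .leaf => []
  | .one t => 0 :: encode t
  | .two l r => 1 :: (encode l ++ (-1) :: encode r)

lemma encode_length (t : OTree) : (encode t).length + 1 = t.size := by
  induction t with
  | leaf => rfl
  | one t ih => simp [encode, OTree.size, ← ih]; omega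
  | two l r ihl ihr => simp [encode, OTree.size, ← ihl, ← ihr]; omega

lemma encode_motzkin (t : OTree) : MotzkinPath (encode t) := by
  induction t with
  | leaf => exact ⟨by simp [encode], by simp [encode, List.prefix_nil] , by simp [encode]⟩
  | one t ih =>
    obtain ⟨hm, hp, hs⟩ := ih
    refine ⟨?_, ?_, by simp [encode, hs]⟩
    · intro s hs'
      simp only [encode, List.mem_cons] at hs'
      rcases hs' with rfl | hs'
      · right; right; rfl
      · exact hm _ hs'
    · intro u hu
      rcases List.prefix_cons_iff.mp hu with h | ⟨v, rfl, hv⟩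
      · simp [h]
      · simpa using hp v hv
  | two l r ihl ihr =>
    obtain ⟨hml, hpl, hsl⟩ := ihl
    obtain ⟨hmr, hpr, hsr⟩ := ihr
    refine ⟨?_, ?_, by simp [encode, hsl, hsr]⟩
    · intro s hs'
      simp only [encode, List.mem_cons, List.mem_append] at hs'
      rcases hs' with rfl | (h | (rfl | h))
      · left; rfl
      · exact hml _ h
      · right; left; rfl
      · exact hmr _ h
    · intro u hu
      rcases List.prefix_cons_iff.mp hu with h | ⟨v, rfl, hv⟩
      · simp [h]
      rcases prefix_append_cases hv with h | ⟨w, rfl, hw⟩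
      · have := hpl v h
        simp; omega
      rcases List.prefix_cons_iff.mp hw with h | ⟨x, rfl, hx⟩
      · subst h; simp [hsl]
      · have := hpr x hx
        simp [hsl]; omega

/-- Uniqueness of the "balanced-prefix" decomposition. -/
lemma split_unique {A A' B B' : List ℤ}
    (hA : ∀ t : List ℤ, t <+: A → 0 ≤ t.sum) (hAs : A.sum = 0)
    (hA' : ∀ t : List ℤ, t <+: A' → 0 ≤ t.sum) (hA's : A'.sum = 0)
    (h : A ++ (-1 : ℤ) :: B = A' ++ (-1 : ℤ) :: B') : A = A' ∧ B = B' := by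
  rcases List.append_eq_append_iff.mp h with ⟨a', h1, h2⟩ | ⟨c', h1, h2⟩
  · rcases a' with _ | ⟨x, a''⟩
    · simp at h1 h2; exact ⟨h1.symm, by simpa using h2⟩
    · simp only [List.cons_append, List.cons.injEq] at h2
      obtain ⟨rfl, _⟩ := h2
      have : (A ++ [(-1 : ℤ)]) <+: A' := by
        rw [h1]; exact ⟨a'', by simp⟩
      have := hA' _ this
      simp [hAs] at this
  · rcases c' with _ | ⟨x, c''⟩
    · simp at h1 h2; exact ⟨h1, by simpa using h2.symm⟩
    · simp only [List.cons_append, List.cons.injEq] at h2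
      obtain ⟨rfl, _⟩ := h2
      have : (A' ++ [(-1 : ℤ)]) <+: A := by
        rw [h1]; exact ⟨c'', by simp⟩
      have := hA _ this
      simp [hA's] at this

lemma encode_injective : Function.Injective encode := by
  intro t1
  induction t1 with
  | leaf => intro t2 h; cases t2 <;> simp_all [encode]
  | one t ih =>
    intro t2 h
    cases t2 with
    | leaf => simp [encode] at h
    | one s => simp only [encode, List.cons.injEq] at h; rw [ih h.2]
    | two l r => simp [encode] at h
  | two l r ihl ihr =>
    intro t2 h
    cases t2 with
    | leaf => simp [encode] at h
    | one s => simp [encode] at h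
    | two l' r' =>
      simp only [encode, List.cons.injEq] at h
      obtain ⟨-, h⟩ := h
      obtain ⟨hl, hr⟩ := split_unique (encode_motzkin l).2.1 (encode_motzkin l).2.2
        (encode_motzkin l').2.1 (encode_motzkin l').2.2 h
      rw [ihl hl, ihr hr]

/-- Existence of the split: a valid-step list with sum ≤ -1 decomposes as a
balanced block followed by `-1`. -/
lemma split_exists_aux : ∀ (n : ℕ) (q : List ℤ), q.length ≤ n →
    (∀ s ∈ q, s = 1 ∨ s = -1 ∨ s = 0) → q.sum ≤ -1 →
    ∃ A B, q = A ++ (-1 : ℤ) :: B ∧ A.sum = 0 ∧ ∀ t : List ℤ, t <+: A → 0 ≤ t.sum := by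
  intro n
  induction n with
  | zero =>
    intro q hq _ hs
    rw [Nat.le_zero, List.length_eq_zero_iff] at hq
    subst hq; simp at hs
  | succ n ih =>
    intro q hlen hm hs
    match q with
    | [] => simp at hs
    | x :: q' =>
      have hm' : ∀ s ∈ q', s = 1 ∨ s = -1 ∨ s = 0 := fun s hs => hm s (by simp [hs])
      have hlen' : q'.length ≤ n := by simp at hlen; omega
      rcases hm x (by simp) with rfl | rfl | rfl
      · -- x = 1
        have hs' : q'.sum ≤ -1 := by simp at hs; omega
        obtain ⟨A', B', rfl, hA's, hA'p⟩ := ih q' hlen' hm' hs'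
        have hB' : B'.sum ≤ -1 := by simp [hA's] at hs ⊢; omega
        have hBlen : B'.length ≤ n := by simp at hlen'; omega
        obtain ⟨A'', B'', rfl, hA''s, hA''p⟩ := ih B' hBlen
          (fun s hs => hm' s (by simp [hs])) hB'
        refine ⟨1 :: A' ++ (-1 : ℤ) :: A'', B'', by simp, by simp [hA's, hA''s], ?_⟩
        intro t ht
        rcases List.prefix_cons_iff.mp ht with h | ⟨v, rfl, hv⟩
        · simp [h]
        rcases prefix_append_cases hv with h | ⟨w, rfl, hw⟩
        · have := hA'p _ h; simp; omega
        rcases List.prefix_cons_iff.mp hw with h | ⟨x, rfl, hx⟩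
        · subst h; simp [hA's]
        · have := hA''p x hx; simp [hA's]; omega
      · -- x = -1
        exact ⟨[], q', by simp, rfl, by intro t ht; simp [List.prefix_nil.mp ht]⟩
      · -- x = 0
        have hs' : q'.sum ≤ -1 := by simp at hs; omega
        obtain ⟨A', B', rfl, hA's, hA'p⟩ := ih q' hlen' hm' hs'
        refine ⟨0 :: A', B', by simp, by simp [hA's], ?_⟩
        intro t ht
        rcases List.prefix_cons_iff.mp ht with h | ⟨v, rfl, hv⟩
        · simp [h]
        · have := hA'p v hv; simp; omega

lemma encode_surjective_aux : ∀ (n : ℕ) (p : List ℤ), p.length ≤ n →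
    MotzkinPath p → ∃ t : OTree, encode t = p := by
  intro n
  induction n with
  | zero =>
    intro p hp _
    rw [Nat.le_zero, List.length_eq_zero_iff] at hp
    subst hp; exact ⟨.leaf, rfl⟩
  | succ n ih =>
    intro p hlen ⟨hm, hp, hs⟩
    match p with
    | [] => exact ⟨.leaf, rfl⟩
    | x :: q =>
      rcases hm x (by simp) with rfl | rfl | rfl
      · -- up step
        have hq : q.sum ≤ -1 := by simp at hs; omega
        obtain ⟨A, B, rfl, hAs, hAp⟩ := split_exists_aux q.length q le_rfl
          (fun s h => hm s (by simp [h])) hq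
        have hAmotz : MotzkinPath A := ⟨fun s h => hm s (by simp [h]), hAp, hAs⟩
        have hBmotz : MotzkinPath B := by
          refine ⟨fun s h => hm s (by simp [h]), ?_, ?_⟩
          · intro t ht
            have hpre : ((1 : ℤ) :: (A ++ (-1 : ℤ) :: t)) <+:
                (1 : ℤ) :: (A ++ (-1 : ℤ) :: B) := by
              obtain ⟨s, rfl⟩ := ht
              exact ⟨s, by simp⟩
            have := hp _ hpre
            simp [hAs] at this ⊢
            omega
          · simp [hAs] at hs; omega
        have hAlen : A.length ≤ n := by simp at hlen; omega
        have hBlen : B.length ≤ n := by simp at hlen; omega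
        obtain ⟨tl, hl⟩ := ih A hAlen hAmotz
        obtain ⟨tr, hr⟩ := ih B hBlen hBmotz
        exact ⟨.two tl tr, by simp [encode, hl, hr]⟩
      · have := hp [-1] ⟨q, rfl⟩; simp at this
      · have hq : MotzkinPath q := by
          refine ⟨fun s h => hm s (by simp [h]), ?_, by simpa using hs⟩
          intro t ht
          have := hp (0 :: t) (by rcases ht with ⟨s, rfl⟩; exact ⟨s, rfl⟩)
          simpa using this
        obtain ⟨t, rfl⟩ := ih q (by simp at hlen; omega) hq
        exact ⟨.one t, rfl⟩

end MotzkinAux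


/-- The number of ordered 1-2 trees with `n+1` vertices equals the `n`-th
Motzkin number. -/
theorem card_orderedTrees_eq_motzkin (n : ℕ) :
    Nat.card {t : OTree // t.size = n + 1} =
      Nat.card {p : List ℤ // p.length = n ∧ MotzkinPath p} := by
  apply Nat.card_congr
  refine Equiv.ofBijective
    (fun t => ⟨MotzkinAux.encode t.1, ?_, MotzkinAux.encode_motzkin t.1⟩) ⟨?_, ?_⟩
  · have := MotzkinAux.encode_length t.1
    have h2 := t.2
    omega
  · intro a b hab
    simp only [Subtype.mk.injEq] at hab
    exact Subtype.ext (MotzkinAux.encode_injective hab)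
  · rintro ⟨p, hlen, hmp⟩
    obtain ⟨t, rfl⟩ := MotzkinAux.encode_surjective_aux p.length p le_rfl hmp
    refine ⟨⟨t, ?_⟩, rfl⟩
    have := MotzkinAux.encode_length t
    omega
end

section
/- If a simsun permutation σ ∈ S_n either contains no 4132-pattern, or every occurrence of a 4132-pattern in σ is contained in an occurrence of a 51342-pattern, then σ^{-1} is also simsun. -/
/-- If a simsun permutation either has no 4132-pattern, or every 4132-pattern
occurrence is contained in a 51342-pattern occurrence, then its inverse is
simsun. -/
theorem inverse_simsun_of_4132_condition {n : ℕ} (σ : Equiv.Perm (Fin n))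
    (hσ : Simsun σ) (h : No4132 σ ∨ Every4132In51342 σ) :
    Simsun σ⁻¹ := by
  intro k hex
  obtain ⟨i, j, l, hij, hjl, hik, hjk, hlk, hcb0, hba0, hg1, hg2⟩ := hex
  obtain ⟨a, ha⟩ : ∃ x : Fin n, σ⁻¹ i = x := ⟨_, rfl⟩
  obtain ⟨b, hb⟩ : ∃ x : Fin n, σ⁻¹ j = x := ⟨_, rfl⟩
  obtain ⟨c, hc⟩ : ∃ x : Fin n, σ⁻¹ l = x := ⟨_, rfl⟩
  rw [hb, ha] at hba0
  rw [hc, hb] at hcb0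
  rw [ha] at hik
  rw [hb] at hjk
  rw [hc] at hlk
  have ea : σ a = i := by rw [← ha]; exact σ.apply_symm_apply i
  have eb : σ b = j := by rw [← hb]; exact σ.apply_symm_apply j
  have ec : σ c = l := by rw [← hc]; exact σ.apply_symm_apply l
  have hijn : i.val < j.val := hij
  have hjln : j.val < l.val := hjl
  have hcbn : c.val < b.val := hcb0
  have hban : b.val < a.val := hba0
  have hA : ∀ p : Fin n, p.val < k → i.val < (σ p).val → (σ p).val < j.val → False := by
    intro p hp h1 h2
    have h3 := hg1 (σ p) (Fin.lt_def.mpr h1) (Fin.lt_def.mpr h2)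
    rw [show σ⁻¹ (σ p) = p from σ.symm_apply_apply p] at h3
    omega
  have hB : ∀ p : Fin n, p.val < k → j.val < (σ p).val → (σ p).val < l.val → False := by
    intro p hp h1 h2
    have h3 := hg2 (σ p) (Fin.lt_def.mpr h1) (Fin.lt_def.mpr h2)
    rw [show σ⁻¹ (σ p) = p from σ.symm_apply_apply p] at h3
    omega
  by_cases hcase : ∃ p : Fin n, c < p ∧ p < b ∧ (σ p).val < i.val
  · obtain ⟨m, hcm, hmb, hsm⟩ := hcase
    have pat : Pattern4132At σ c m b a :=
      ⟨hcm, hmb, hba0, by rw [ea]; exact Fin.lt_def.mpr hsm,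
        by rw [ea, eb]; exact hij, by rw [eb, ec]; exact hjl⟩
    rcases h with hno | hev
    · exact hno ⟨c, m, b, a, pat⟩
    · obtain ⟨j1, j2, j3, j4, j5, ⟨p12, p23, p34, p45, v25, v53, v34, v41⟩, hsub⟩ :=
        hev c m b a pat
      have ean : (σ a).val = i.val := by rw [ea]
      have ebn : (σ b).val = j.val := by rw [eb]
      have ecn : (σ c).val = l.val := by rw [ec]
      have hcmn : c.val < m.val := hcm
      have hmbn : m.val < b.val := hmb
      have p12n : j1.val < j2.val := p12
      have p23n : j2.val < j3.val := p23
      have p34n : j3.val < j4.val := p34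
      have p45n : j4.val < j5.val := p45
      have v25n : (σ j2).val < (σ j5).val := v25
      have v53n : (σ j5).val < (σ j3).val := v53
      have v34n : (σ j3).val < (σ j4).val := v34
      have v41n : (σ j4).val < (σ j1).val := v41
      have hc5 : c = j1 ∨ c = j2 ∨ c = j3 ∨ c = j4 ∨ c = j5 := by
        have := hsub (show c ∈ ({c, m, b, a} : Set (Fin n)) by simp)
        simpa using this
      have hm5 : m = j1 ∨ m = j2 ∨ m = j3 ∨ m = j4 ∨ m = j5 := by
        have := hsub (show m ∈ ({c, m, b, a} : Set (Fin n)) by simp)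
        simpa using this
      have hb5 : b = j1 ∨ b = j2 ∨ b = j3 ∨ b = j4 ∨ b = j5 := by
        have := hsub (show b ∈ ({c, m, b, a} : Set (Fin n)) by simp)
        simpa using this
      have ha5 : a = j1 ∨ a = j2 ∨ a = j3 ∨ a = j4 ∨ a = j5 := by
        have := hsub (show a ∈ ({c, m, b, a} : Set (Fin n)) by simp)
        simpa using this
      clear pat hsub hcm hmb hba0 hcb0 p12 p23 p34 p45 v25 v53 v34 v41 hg1 hg2 hij hjl
      rcases hc5 with rfl|rfl|rfl|rfl|rfl <;>
        rcases hm5 with rfl|rfl|rfl|rfl|rfl <;>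
        rcases hb5 with rfl|rfl|rfl|rfl|rfl <;>
        rcases ha5 with rfl|rfl|rfl|rfl|rfl <;>
        first
          | omega
          | exact hA j3 (by omega) (by omega) (by omega)
          | exact hB j4 (by omega) (by omega) (by omega)
          | exact hA j1 (by omega) (by omega) (by omega)
          | exact hA j2 (by omega) (by omega) (by omega)
          | exact hA j4 (by omega) (by omega) (by omega)
          | exact hA j5 (by omega) (by omega) (by omega)
          | exact hB j1 (by omega) (by omega) (by omega)
          | exact hB j2 (by omega) (by omega) (by omega)
          | exact hB j3 (by omega) (by omega) (by omega)
          | exact hB j5 (by omega) (by omega) (by omega)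
          | exact hA c (by omega) (by omega) (by omega)
          | exact hA m (by omega) (by omega) (by omega)
          | exact hA b (by omega) (by omega) (by omega)
          | exact hA a (by omega) (by omega) (by omega)
          | exact hB c (by omega) (by omega) (by omega)
          | exact hB m (by omega) (by omega) (by omega)
          | exact hB b (by omega) (by omega) (by omega)
          | exact hB a (by omega) (by omega) (by omega)
  · push_neg at hcase
    have hside : ∀ p : Fin n, p.val < k → p ≠ a → p ≠ b → p ≠ c →
        (σ p).val < i.val ∨ l.val < (σ p).val := by
      intro p hp hpa hpb hpc
      by_contra hcon
      push_neg at hcon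
      obtain ⟨h1, h2⟩ := hcon
      have n1 : (σ p).val ≠ i.val := fun e =>
        hpa (σ.injective (show σ p = σ a by rw [ea]; exact Fin.ext e))
      have n2 : (σ p).val ≠ j.val := fun e =>
        hpb (σ.injective (show σ p = σ b by rw [eb]; exact Fin.ext e))
      have n3 : (σ p).val ≠ l.val := fun e =>
        hpc (σ.injective (show σ p = σ c by rw [ec]; exact Fin.ext e))
      rcases lt_trichotomy (σ p).val j.val with hh|hh|hh
      · exact hA p hp (by omega) hh
      · exact n2 hh
      · exact hB p hp hh (by omega)
    have hbig : ∀ p : Fin n, c < p → p < b → l.val < (σ p).val := by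
      intro p h1 h2
      have h2n : p.val < b.val := h2
      have hpk : p.val < k := by omega
      rcases hside p hpk (ne_of_lt (h2.trans hba0)) (ne_of_lt h2) (ne_of_gt h1) with hh|hh
      · have := hcase p h1 h2; omega
      · exact hh
    have hSne : (Finset.univ.filter fun p : Fin n => b < p ∧ (σ p).val ≤ l.val).Nonempty := by
      refine ⟨a, ?_⟩
      simp only [Finset.mem_filter, Finset.mem_univ, true_and]
      exact ⟨hba0, by rw [ea]; omega⟩
    set m0 := (Finset.univ.filter fun p : Fin n => b < p ∧ (σ p).val ≤ l.val).min' hSne with hm0def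
    have hm0mem := Finset.min'_mem _ hSne
    rw [← hm0def] at hm0mem
    simp only [Finset.mem_filter, Finset.mem_univ, true_and] at hm0mem
    obtain ⟨hbm0, hm0l⟩ := hm0mem
    have hm0a : m0 ≤ a := by
      apply Finset.min'_le
      simp only [Finset.mem_filter, Finset.mem_univ, true_and]
      exact ⟨hba0, by rw [ea]; omega⟩
    have hmin : ∀ p : Fin n, b < p → p < m0 → l.val < (σ p).val := by
      intro p h1 h2
      by_contra hcon
      push_neg at hcon
      have hmem : p ∈ Finset.univ.filter fun q : Fin n => b < q ∧ (σ q).val ≤ l.val := by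
        simp only [Finset.mem_filter, Finset.mem_univ, true_and]
        exact ⟨h1, hcon⟩
      exact absurd (Finset.min'_le _ p hmem) (not_le.mpr h2)
    have hm0j : (σ m0).val < j.val := by
      rcases eq_or_lt_of_le hm0a with e|e
      · rw [e, ea]; exact hijn
      · have hen : m0.val < a.val := e
        have hpk : m0.val < k := by omega
        rcases hside m0 hpk (ne_of_lt e) (ne_of_gt hbm0) (ne_of_gt (hcb0.trans hbm0)) with hh|hh
        · omega
        · omega
    exact hσ (l.val + 1) ⟨c, b, m0, hcb0, hbm0,
      by rw [ec]; omega,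
      by rw [eb]; omega,
      by omega,
      by rw [eb]; exact Fin.lt_def.mpr hm0j,
      by rw [eb, ec]; exact hjl,
      fun p h1 h2 => by have := hbig p h1 h2; omega,
      fun p h1 h2 => by have := hmin p h1 h2; omega⟩
end

section
/- Let σ ∈ S_n be a 213-avoiding simsun permutation. Then σ^{-1} is simsun if and only if either σ contains no 4132-pattern, or every occurrence of a 4132-pattern in σ is contained in an occurrence of a 51342-pattern. -/
-- Direction B : a 4132 occurrence contained in no 51342 forces σ⁻¹ not simsun
lemma lemB {n : ℕ} (σ : Equiv.Perm (Fin n)) (h213 : Avoids213 σ)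
    (i1 i2 i3 i4 : Fin n) (hpat : Pattern4132At σ i1 i2 i3 i4)
    (hnc : ∀ j1 j2 j3 j4 j5 : Fin n, Pattern51342At σ j1 j2 j3 j4 j5 →
      ¬ (({i1, i2, i3, i4} : Set (Fin n)) ⊆ ({j1, j2, j3, j4, j5} : Set (Fin n)))) :
    ¬ Simsun σ⁻¹ := by
  obtain ⟨h12, h23, h34, hv24, hv43, hv31⟩ := hpat
  have hb1 : (σ i3).val + 1 < n := by have := (σ i1).isLt; omega
  have hb0 : (σ i3).val - 1 < n := by omega
  set w : Fin n := ⟨(σ i3).val + 1, hb1⟩ with hw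
  set v : Fin n := ⟨(σ i3).val - 1, hb0⟩ with hv
  have hwval : w.val = (σ i3).val + 1 := rfl
  have hvval : v.val = (σ i3).val - 1 := rfl
  have hvpos : 1 ≤ (σ i3).val := by omega
  set p := σ⁻¹ w with hp
  set q := σ⁻¹ v with hq
  have hpw : σ p = w := Equiv.apply_symm_apply σ w
  have hqv : σ q = v := Equiv.apply_symm_apply σ v
  have hsub : ({i1, i2, i3, i4} : Set (Fin n)) ⊆ ({i1, i2, i3, p, i4} : Set (Fin n)) := by
    intro z hz; simp only [Set.mem_insert_iff, Set.mem_singleton_iff] at hz ⊢; tauto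
  have hsub2 : ({i1, i2, i3, i4} : Set (Fin n)) ⊆ ({i1, i2, q, i3, i4} : Set (Fin n)) := by
    intro z hz; simp only [Set.mem_insert_iff, Set.mem_singleton_iff] at hz ⊢; tauto
  -- claim 1 : p < i3
  have claim1 : p < i3 := by
    rcases lt_trichotomy p i3 with h | h | h
    · exact h
    · exfalso; rw [h] at hpw; omega
    · exfalso
      rcases lt_trichotomy p i4 with h' | h' | h'
      · refine hnc i1 i2 i3 p i4 ⟨h12, h23, h, h', hv24, hv43, by omega, ?_⟩ hsub
        have hpi1 : p ≠ i1 := by omega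
        have : σ p ≠ σ i1 := fun hh => hpi1 (σ.injective hh)
        omega
      · rw [h'] at hpw; omega
      · exact h213 ⟨i3, i4, p, h34, h', hv43, by omega⟩
  -- claim 2 : i3 < q
  have claim2 : i3 < q := by
    rcases lt_trichotomy q i3 with h | h | h
    · exfalso
      have hqi4 : q ≠ i4 := by omega
      have hva : σ i4 < v := by
        have : σ i4 ≠ σ q := fun hh => hqi4 (σ.injective hh.symm)
        omega
      rcases lt_trichotomy q i2 with h' | h' | h'
      · exact h213 ⟨q, i2, i3, h', h23, by omega, by omega⟩
      · rw [h'] at hqv; omega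
      · exact hnc i1 i2 q i3 i4 ⟨h12, h', h, h34, hv24, by omega, by omega, hv31⟩ hsub2
    · exfalso; rw [h] at hqv; omega
    · exact h
  -- assemble
  intro hsim
  refine hsim n ⟨v, σ i3, w, by omega, by omega, (σ⁻¹ v).isLt, (σ⁻¹ (σ i3)).isLt,
    (σ⁻¹ w).isLt, ?_, ?_, ?_, ?_⟩
  · rw [show σ⁻¹ (σ i3) = i3 from Equiv.symm_apply_apply σ i3]; exact claim1
  · rw [show σ⁻¹ (σ i3) = i3 from Equiv.symm_apply_apply σ i3]; exact claim2
  · intro m u1 u2; exfalso; omega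
  · intro m u1 u2; exfalso; omega

-- Direction A : σ⁻¹ not simsun forces a 4132 occurrence contained in no 51342
lemma lemA {n : ℕ} (σ : Equiv.Perm (Fin n)) (hσ : Simsun σ) (hns : ¬ Simsun σ⁻¹) :
    ∃ i1 i2 i3 i4 : Fin n, Pattern4132At σ i1 i2 i3 i4 ∧
      ∀ j1 j2 j3 j4 j5 : Fin n, Pattern51342At σ j1 j2 j3 j4 j5 →
        ¬ (({i1, i2, i3, i4} : Set (Fin n)) ⊆ ({j1, j2, j3, j4, j5} : Set (Fin n))) := by
  classical
  unfold Simsun at hns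
  push_neg at hns
  obtain ⟨k, a, b, c, hab, hbc, hka, hkb, hkc, hlt1, hlt2, hP, hQ⟩ := hns
  set pa := σ⁻¹ a with hpa
  set pb := σ⁻¹ b with hpb
  set pc := σ⁻¹ c with hpc
  have hsa : σ pa = a := Equiv.apply_symm_apply σ a
  have hsb : σ pb = b := Equiv.apply_symm_apply σ b
  have hsc : σ pc = c := Equiv.apply_symm_apply σ c
  have hmid : ∀ u : Fin n, a < u → u < c → u ≠ b → pa < σ⁻¹ u := by
    intro u h1 h2 h3
    rcases lt_or_gt_of_ne h3 with h | h
    · have := hP u h1 h; omega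
    · have := hQ u h h2; omega
  have key : ∀ m : Fin n, pc < m → m < pa → m ≠ pb → ¬ σ m < a → c.val + 1 ≤ (σ m).val := by
    intro m h1 h2 h3 h4
    by_contra hle
    push_neg at hle
    have e1 : σ m ≠ c := fun h => (ne_of_gt h1) (σ.injective (h.trans hsc.symm))
    have e2 : σ m ≠ a := fun h => (ne_of_lt h2) (σ.injective (h.trans hsa.symm))
    have e3 : σ m ≠ b := fun h => h3 (σ.injective (h.trans hsb.symm))
    have h7 := hmid (σ m) (by omega) (by omega) e3
    rw [show σ⁻¹ (σ m) = m from Equiv.symm_apply_apply σ m] at h7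
    omega
  have hex : ∃ m : Fin n, pc < m ∧ m < pa ∧ m ≠ pb ∧ σ m < a := by
    by_contra hno
    push_neg at hno
    refine hσ (c.val + 1) ⟨pc, pb, pa, hlt1, hlt2, by omega, by omega, by omega,
      by omega, by omega, ?_, ?_⟩
    · intro m u1 u2
      exact key m u1 (u2.trans hlt2) (ne_of_lt u2)
        (not_lt.mpr (hno m u1 (u2.trans hlt2) (ne_of_lt u2)))
    · intro m u1 u2
      exact key m (hlt1.trans u1) u2 (ne_of_gt u1)
        (not_lt.mpr (hno m (hlt1.trans u1) u2 (ne_of_gt u1)))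
  set S : Finset (Fin n) :=
    Finset.univ.filter (fun m => pc < m ∧ m < pa ∧ m ≠ pb ∧ σ m < a) with hS
  have hSne : S.Nonempty := by
    obtain ⟨m, hm1, hm2, hm3, hm4⟩ := hex
    exact ⟨m, by simp [hS, hm1, hm2, hm3, hm4]⟩
  set m0 := S.min' hSne with hm0def
  have hm0 : pc < m0 ∧ m0 < pa ∧ m0 ≠ pb ∧ σ m0 < a := by
    exact (Finset.mem_filter.mp (S.min'_mem hSne)).2
  have hmin : ∀ m' : Fin n, pc < m' → m' < pa → m' ≠ pb → σ m' < a → m0 ≤ m' := by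
    intro m' u1 u2 u3 u4
    exact S.min'_le m' (by simp [hS, u1, u2, u3, u4])
  have hm0pb : m0 < pb := by
    rcases lt_or_gt_of_ne hm0.2.2.1 with h | h
    · exact h
    · exfalso
      have hex2 : ∃ m : Fin n, pc < m ∧ m < m0 ∧ m ≠ pb ∧ σ m < a := by
        by_contra hno
        push_neg at hno
        refine hσ (c.val + 1) ⟨pc, pb, m0, hlt1, h, by omega, by omega, ?_, ?_, by omega, ?_, ?_⟩
        · have := hm0.2.2.2; omega
        · have := hm0.2.2.2; omega
        · intro m u1 u2
          have u2' : m < m0 := u2.trans h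
          exact key m u1 (u2'.trans hm0.2.1) (ne_of_lt u2)
            (not_lt.mpr (hno m u1 u2' (ne_of_lt u2)))
        · intro m u1 u2
          exact key m (hlt1.trans u1) (u2.trans hm0.2.1) (ne_of_gt u1)
            (not_lt.mpr (hno m (hlt1.trans u1) u2 (ne_of_gt u1)))
      obtain ⟨m', u1, u2, u3, u4⟩ := hex2
      have := hmin m' u1 (u2.trans hm0.2.1) u3 u4
      omega
  refine ⟨pc, m0, pb, pa, ⟨hm0.1, hm0pb, hlt2, by omega, by omega, by omega⟩, ?_⟩
  intro j1 j2 j3 j4 j5 hJ hsub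
  obtain ⟨g12, g23, g34, g45, gv25, gv53, gv34, gv41⟩ := hJ
  have mkD : ∀ t : Fin n, (σ t).val ≤ a.val ∨ c.val ≤ (σ t).val ∨ (σ t).val = b.val ∨
      pa.val < t.val := by
    intro t
    by_cases u1 : a < σ t
    · by_cases u2 : σ t < c
      · by_cases u3 : σ t = b
        · right; right; left; exact congrArg Fin.val u3
        · right; right; right
          have := hmid (σ t) u1 u2 u3
          rw [show σ⁻¹ (σ t) = t from Equiv.symm_apply_apply σ t] at this
          exact this
      · right; left; omega
    · left; omega
  have D3 := mkD j3
  have D4 := mkD j4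
  have c1 : pc = j1 ∨ pc = j2 ∨ pc = j3 ∨ pc = j4 ∨ pc = j5 := by
    have := hsub (show pc ∈ ({pc, m0, pb, pa} : Set (Fin n)) by simp)
    simpa using this
  have c2 : m0 = j1 ∨ m0 = j2 ∨ m0 = j3 ∨ m0 = j4 ∨ m0 = j5 := by
    have := hsub (show m0 ∈ ({pc, m0, pb, pa} : Set (Fin n)) by simp)
    simpa using this
  have c3 : pb = j1 ∨ pb = j2 ∨ pb = j3 ∨ pb = j4 ∨ pb = j5 := by
    have := hsub (show pb ∈ ({pc, m0, pb, pa} : Set (Fin n)) by simp)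
    simpa using this
  have c4 : pa = j1 ∨ pa = j2 ∨ pa = j3 ∨ pa = j4 ∨ pa = j5 := by
    have := hsub (show pa ∈ ({pc, m0, pb, pa} : Set (Fin n)) by simp)
    simpa using this
  have hm0a : σ m0 < a := hm0.2.2.2
  have hm01 : pc < m0 := hm0.1
  clear hmid key hmin hsub mkD hP hQ hka hkb hkc
  rcases c1 with e | e | e | e | e <;> rcases c2 with f | f | f | f | f <;>
    rcases c3 with g | g | g | g | g <;> rcases c4 with hh | hh | hh | hh | hh <;>
    · have e1 := congrArg Fin.val e
      have e2 := congrArg (fun z => (σ z).val) e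
      have f1 := congrArg Fin.val f
      have f2 := congrArg (fun z => (σ z).val) f
      have g1 := congrArg Fin.val g
      have g2 := congrArg (fun z => (σ z).val) g
      have hh1 := congrArg Fin.val hh
      have hh2 := congrArg (fun z => (σ z).val) hh
      omega


/-- For a 213-avoiding simsun permutation `σ`, the inverse `σ⁻¹` is simsun iff
either `σ` has no 4132-pattern, or every 4132-pattern occurrence in `σ` is
contained in a 51342-pattern occurrence. -/
theorem inverse_simsun_iff_4132_condition {n : ℕ} (σ : Equiv.Perm (Fin n))
    (hσ : Simsun σ) (h213 : Avoids213 σ) :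
    Simsun σ⁻¹ ↔ (No4132 σ ∨ Every4132In51342 σ) := by
  constructor
  · intro hinv
    by_contra hcon
    push_neg at hcon
    have h2 := hcon.2
    unfold Every4132In51342 at h2
    push_neg at h2
    obtain ⟨i1, i2, i3, i4, hpat, hnc⟩ := h2
    exact lemB σ h213 i1 i2 i3 i4 hpat
      hnc hinv
  · intro hrhs
    by_contra hns
    obtain ⟨i1, i2, i3, i4, hpat, hnc⟩ := lemA σ hσ hns
    rcases hrhs with h | h
    · exact h ⟨i1, i2, i3, i4, hpat⟩
    · obtain ⟨j1, j2, j3, j4, j5, hJ, hsub⟩ := h i1 i2 i3 i4 hpat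
      exact hnc j1 j2 j3 j4 j5 hJ hsub
end

section
/- The number of simsun permutations in S_n avoiding both 231 and 213 equals the Fibonacci number F_{n+1}. -/
namespace SimsunAux
variable {n : ℕ}


lemma desc_max {σ : Equiv.Perm (Fin n)} (h213 : Avoids213 σ)
    (i : Fin n) (h : (i : ℕ) + 1 < n) (hd : σ ⟨i + 1, h⟩ < σ i) :
    ∀ j : Fin n, i < j → σ j < σ i := by
  intro j hij
  by_cases hji : j = ⟨i + 1, h⟩
  · subst hji; exact hd
  rcases lt_trichotomy (σ j) (σ i) with h1 | h1 | h1
  · exact h1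
  · exact absurd (σ.injective h1) (by rintro rfl; exact lt_irrefl _ hij)
  · exfalso
    exact h213 ⟨i, ⟨i + 1, h⟩, j, by simp [Fin.lt_def], by
      simp only [Fin.lt_def]
      have h2 : (i : ℕ) < (j : ℕ) := hij
      have h3 : (j : ℕ) ≠ (i : ℕ) + 1 := fun hc => hji (Fin.ext hc)
      omega, hd, h1⟩

lemma asc_min {σ : Equiv.Perm (Fin n)} (h231 : Avoids231 σ)
    (i : Fin n) (h : (i : ℕ) + 1 < n) (hd : σ i < σ ⟨i + 1, h⟩) :
    ∀ j : Fin n, i < j → σ i < σ j := by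
  intro j hij
  by_cases hji : j = ⟨i + 1, h⟩
  · subst hji; exact hd
  rcases lt_trichotomy (σ j) (σ i) with h1 | h1 | h1
  · exfalso
    exact h231 ⟨i, ⟨i + 1, h⟩, j, by simp [Fin.lt_def], by
      simp only [Fin.lt_def]
      have h2 : (i : ℕ) < (j : ℕ) := hij
      have h3 : (j : ℕ) ≠ (i : ℕ) + 1 := fun hc => hji (Fin.ext hc)
      omega, h1, hd⟩
  · exact absurd (σ.injective h1) (by rintro rfl; exact lt_irrefl _ hij)
  · exact h1

lemma class_ext {σ τ : Equiv.Perm (Fin n)}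
    (hσ1 : Avoids231 σ) (hσ2 : Avoids213 σ) (hτ1 : Avoids231 τ) (hτ2 : Avoids213 τ)
    (hd : ∀ (i : Fin n) (h : (i : ℕ) + 1 < n), (σ ⟨i + 1, h⟩ < σ i ↔ τ ⟨i + 1, h⟩ < τ i)) :
    σ = τ := by
  have main : ∀ m : ℕ, ∀ i : Fin n, (i : ℕ) < m → σ i = τ i := by
    intro m
    induction m with
    | zero => intro i hi; omega
    | succ m ih =>
      intro i hi
      rcases Nat.lt_or_ge (i : ℕ) m with hc | hc
      · exact ih i hc
      have him : (i : ℕ) = m := by omega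
      have hpre : ∀ j : Fin n, j < i → σ j = τ j := fun j hj => ih j (by
        have : (j : ℕ) < (i : ℕ) := hj
        omega)
      set j0 := τ.symm (σ i) with hj0def
      have hj0v : τ j0 = σ i := τ.apply_symm_apply _
      have hj0 : i ≤ j0 := by
        by_contra hcon
        push_neg at hcon
        have he : σ j0 = τ j0 := hpre j0 hcon
        have : σ j0 = σ i := by rw [he, hj0v]
        have h2 := σ.injective this
        exact lt_irrefl i (h2 ▸ hcon)
      set j1 := σ.symm (τ i) with hj1def
      have hj1v : σ j1 = τ i := σ.apply_symm_apply _
      have hj1 : i ≤ j1 := by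
        by_contra hcon
        push_neg at hcon
        have he : σ j1 = τ j1 := hpre j1 hcon
        have : τ j1 = τ i := by rw [← he, hj1v]
        have h2 := τ.injective this
        exact lt_irrefl i (h2 ▸ hcon)
      by_cases hl : (i : ℕ) + 1 < n
      · rcases eq_or_lt_of_le hj0 with he0 | hlt0
        · rw [← hj0v, ← he0]
        rcases eq_or_lt_of_le hj1 with he1 | hlt1
        · rw [← hj1v, ← he1]
        exfalso
        rcases lt_trichotomy (σ ⟨i + 1, hl⟩) (σ i) with hcase | hcase | hcase
        · -- descent for both
          have hdτ : τ ⟨i + 1, hl⟩ < τ i := (hd i hl).1 hcase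
          have h1 : τ j0 < τ i := desc_max hτ2 i hl hdτ j0 hlt0
          have h2 : σ j1 < σ i := desc_max hσ2 i hl hcase j1 hlt1
          rw [hj0v] at h1; rw [hj1v] at h2
          exact absurd (h1.trans h2) (lt_irrefl _)
        · exact absurd (σ.injective hcase) (by intro hcc; simpa using congrArg Fin.val hcc)
        · -- ascent for both
          have hdτ : τ i < τ ⟨i + 1, hl⟩ := by
            rcases lt_trichotomy (τ ⟨i + 1, hl⟩) (τ i) with hc2 | hc2 | hc2
            · exact absurd ((hd i hl).2 hc2) (not_lt_of_gt hcase)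
            · exact absurd (τ.injective hc2) (by intro hcc; simpa using congrArg Fin.val hcc)
            · exact hc2
          have h1 : τ i < τ j0 := asc_min hτ1 i hl hdτ j0 hlt0
          have h2 : σ i < σ j1 := asc_min hσ1 i hl hcase j1 hlt1
          rw [hj0v] at h1; rw [hj1v] at h2
          exact absurd (h1.trans h2) (lt_irrefl _)
      · -- i is the last position
        have : (j0 : ℕ) ≤ (i : ℕ) := by have := j0.isLt; omega
        have he0 : j0 = i := le_antisymm this hj0
        rw [← hj0v, he0]
  exact Equiv.ext fun i => main n i i.isLt



def Tcnt (c : Fin n → Bool) (i : ℕ) : ℕ :=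
  (Finset.univ.filter fun j : Fin n => (j : ℕ) < i ∧ c j = true).card

def Fcnt (c : Fin n → Bool) (i : ℕ) : ℕ :=
  (Finset.univ.filter fun j : Fin n => (j : ℕ) < i ∧ c j = false).card

def fval (c : Fin n → Bool) (i : Fin n) : ℕ :=
  if c i then n - 1 - Tcnt c (i : ℕ) else Fcnt c (i : ℕ)

lemma cnt_sum (c : Fin n → Bool) (i : Fin n) : Fcnt c (i : ℕ) + Tcnt c (i : ℕ) = (i : ℕ) := by
  classical
  have hdis : Disjoint (Finset.univ.filter fun j : Fin n => (j : ℕ) < (i : ℕ) ∧ c j = false)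
      (Finset.univ.filter fun j : Fin n => (j : ℕ) < (i : ℕ) ∧ c j = true) := by
    rw [Finset.disjoint_filter]
    rintro x _ ⟨_, hx⟩ ⟨_, hx'⟩
    simp [hx] at hx'
  have hunion : (Finset.univ.filter fun j : Fin n => (j : ℕ) < (i : ℕ) ∧ c j = false) ∪
      (Finset.univ.filter fun j : Fin n => (j : ℕ) < (i : ℕ) ∧ c j = true) =
      Finset.univ.filter fun j : Fin n => (j : ℕ) < (i : ℕ) := by
    rw [← Finset.filter_or]
    apply Finset.filter_congr
    intro x _
    rcases Bool.dichotomy (c x) with h | h <;> simp [h]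
  have hcard := Finset.card_union_of_disjoint hdis
  rw [hunion] at hcard
  have hIio : (Finset.univ.filter fun j : Fin n => (j : ℕ) < (i : ℕ)) = Finset.Iio i := by
    ext j
    simp only [Finset.mem_filter, Finset.mem_Iio, Finset.mem_univ, true_and, Fin.lt_def]
  rw [hIio, Fin.card_Iio] at hcard
  rw [Fcnt, Tcnt, ← hcard]

lemma Tcnt_mono (c : Fin n → Bool) {a b : ℕ} (h : a ≤ b) : Tcnt c a ≤ Tcnt c b := by
  apply Finset.card_le_card
  intro x
  simp only [Finset.mem_filter]
  exact fun ⟨h1, h2, h3⟩ => ⟨h1, by omega, h3⟩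

lemma Fcnt_mono (c : Fin n → Bool) {a b : ℕ} (h : a ≤ b) : Fcnt c a ≤ Fcnt c b := by
  apply Finset.card_le_card
  intro x
  simp only [Finset.mem_filter]
  exact fun ⟨h1, h2, h3⟩ => ⟨h1, by omega, h3⟩

lemma Tcnt_strict (c : Fin n → Bool) {i j : Fin n} (h : i < j) (hc : c i = true) :
    Tcnt c (i : ℕ) < Tcnt c (j : ℕ) := by
  apply Finset.card_lt_card
  constructor
  · intro x
    simp only [Finset.mem_filter]
    have : (i : ℕ) < j := h
    exact fun ⟨h1, h2, h3⟩ => ⟨h1, by omega, h3⟩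
  · intro hsub
    have : i ∈ Finset.univ.filter fun j' : Fin n => (j' : ℕ) < (j : ℕ) ∧ c j' = true := by
      simp only [Finset.mem_filter]
      exact ⟨Finset.mem_univ _, h, hc⟩
    have := hsub this
    simp only [Finset.mem_filter] at this
    omega

lemma Fcnt_strict (c : Fin n → Bool) {i j : Fin n} (h : i < j) (hc : c i = false) :
    Fcnt c (i : ℕ) < Fcnt c (j : ℕ) := by
  apply Finset.card_lt_card
  constructor
  · intro x
    simp only [Finset.mem_filter]
    have : (i : ℕ) < j := h
    exact fun ⟨h1, h2, h3⟩ => ⟨h1, by omega, h3⟩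
  · intro hsub
    have : i ∈ Finset.univ.filter fun j' : Fin n => (j' : ℕ) < (j : ℕ) ∧ c j' = false := by
      simp only [Finset.mem_filter]
      exact ⟨Finset.mem_univ _, h, hc⟩
    have := hsub this
    simp only [Finset.mem_filter] at this
    omega

lemma fval_lt (c : Fin n → Bool) (i : Fin n) : fval c i < n := by
  have h1 := cnt_sum c i
  have h2 := i.isLt
  rw [fval]
  split <;> omega

/-- if `c i = true` then `fval` at `i` is a strict max of the suffix -/
lemma fval_max (c : Fin n → Bool) (hc : ∀ i : Fin n, (i : ℕ) + 1 = n → c i = false)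
    {i j : Fin n} (hij : i < j) (hi : c i = true) : fval c j < fval c i := by
  have hsum_i := cnt_sum c i
  have hsum_j := cnt_sum c j
  have hT := Tcnt_strict c hij hi
  have hjn := j.isLt
  rw [fval, fval, hi, if_pos rfl]
  split
  · -- c j = true, so j is not the last position
    next hcj =>
      have hjlast : (j : ℕ) + 1 ≠ n := fun hl => by
        have := hc j hl; rw [this] at hcj; exact Bool.false_ne_true hcj
      omega
  · omega

lemma fval_min (c : Fin n → Bool) (hc : ∀ i : Fin n, (i : ℕ) + 1 = n → c i = false)
    {i j : Fin n} (hij : i < j) (hi : c i = false) : fval c i < fval c j := by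
  have hsum_i := cnt_sum c i
  have hsum_j := cnt_sum c j
  have hF := Fcnt_strict c hij hi
  have hFm := Fcnt_mono c (le_of_lt (show (i : ℕ) < j from hij))
  have hjn := j.isLt
  rw [fval, fval, hi, if_neg (by simp)]
  split
  · next hcj =>
      have hjlast : (j : ℕ) + 1 ≠ n := fun hl => by
        have := hc j hl; rw [this] at hcj; exact Bool.false_ne_true hcj
      omega
  · omega



lemma simsun_iff' {σ : Equiv.Perm (Fin n)} (h231 : Avoids231 σ) :
    Simsun σ ↔ ∀ i : Fin n, ∀ h2 : (i : ℕ) + 2 < n,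
      ¬ (σ ⟨i + 2, h2⟩ < σ ⟨i + 1, by omega⟩ ∧ σ ⟨i + 1, by omega⟩ < σ i) := by
  constructor
  · intro hs i h2 ⟨hd2, hd1⟩
    exact hs n ⟨i, ⟨i + 1, by omega⟩, ⟨i + 2, h2⟩,
      show (i : ℕ) < i + 1 by omega, show (i : ℕ) + 1 < i + 2 by omega,
      (σ i).isLt, Fin.isLt _, Fin.isLt _, hd2, hd1,
      fun m hm1 hm2 => by
        have h1 : (i : ℕ) < m := hm1
        have h3 : (m : ℕ) < i + 1 := hm2
        omega,
      fun m hm1 hm2 => by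
        have h1 : (i : ℕ) + 1 < m := hm1
        have h3 : (m : ℕ) < i + 2 := hm2
        omega⟩
  · intro h k ⟨i, j, l, hij, hjl, hik, hjk, hlk, hlj, hji, g1, g2⟩
    have hji' : (i : ℕ) < j := hij
    have hjl' : (j : ℕ) < l := hjl
    have hj1 : (j : ℕ) = i + 1 := by
      by_contra hc
      have hm : (i : ℕ) + 1 < n := by have := j.isLt; omega
      have hgap := g1 ⟨i + 1, hm⟩ (show (i : ℕ) < i + 1 by omega) (show (i : ℕ) + 1 < j by omega)
      exact h231 ⟨i, ⟨i + 1, hm⟩, j, show (i : ℕ) < i + 1 by omega,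
        show (i : ℕ) + 1 < j by omega, hji,
        show ((σ i : Fin n) : ℕ) < (σ ⟨i + 1, hm⟩ : Fin n) by omega⟩
    have hl1 : (l : ℕ) = j + 1 := by
      by_contra hc
      have hm : (j : ℕ) + 1 < n := by have := l.isLt; omega
      have hgap := g2 ⟨j + 1, hm⟩ (show (j : ℕ) < j + 1 by omega) (show (j : ℕ) + 1 < l by omega)
      exact h231 ⟨j, ⟨j + 1, hm⟩, l, show (j : ℕ) < j + 1 by omega,
        show (j : ℕ) + 1 < l by omega, hlj,
        show ((σ j : Fin n) : ℕ) < (σ ⟨j + 1, hm⟩ : Fin n) by omega⟩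
    have h2 : (i : ℕ) + 2 < n := by have := l.isLt; omega
    refine h i h2 ⟨?_, ?_⟩
    · convert hlj using 2 <;> exact Fin.ext (by simp; omega)
    · convert hji using 2
      exact Fin.ext (by simp; omega)



-- assume previous results:
/-- The word conditions: last letter false, no two adjacent trues. -/
def LastF (c : Fin n → Bool) : Prop := ∀ i : Fin n, (i : ℕ) + 1 = n → c i = false

def NoAdj (c : Fin n → Bool) : Prop :=
  ∀ i : Fin n, ∀ h : (i : ℕ) + 1 < n, ¬(c i = true ∧ c ⟨i + 1, h⟩ = true)

noncomputable def Phi (c : Fin n → Bool) (hc : LastF c) : Equiv.Perm (Fin n) :=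
  Equiv.ofBijective (fun i => (⟨fval c i, fval_lt c i⟩ : Fin n)) <| by
    rw [Finite.injective_iff_bijective.symm]
    intro i j h
    have hv : fval c i = fval c j := congrArg Fin.val h
    rcases lt_trichotomy i j with hij | hij | hij
    · exfalso
      rcases Bool.dichotomy (c i) with hci | hci
      · exact absurd hv (ne_of_lt (fval_min c hc hij hci))
      · exact absurd hv.symm (ne_of_lt (fval_max c hc hij hci))
    · exact hij
    · exfalso
      rcases Bool.dichotomy (c j) with hcj | hcj
      · exact absurd hv.symm (ne_of_lt (fval_min c hc hij hcj))
      · exact absurd hv (ne_of_lt (fval_max c hc hij hcj))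

lemma Phi_apply (c : Fin n → Bool) (hc : LastF c) (i : Fin n) :
    Phi c hc i = ⟨fval c i, fval_lt c i⟩ := rfl

lemma Phi_lt_of_true (c : Fin n → Bool) (hc : LastF c) {i j : Fin n}
    (hij : i < j) (hci : c i = true) : Phi c hc j < Phi c hc i :=
  show fval c j < fval c i from fval_max c hc hij hci

lemma Phi_lt_of_false (c : Fin n → Bool) (hc : LastF c) {i j : Fin n}
    (hij : i < j) (hci : c i = false) : Phi c hc i < Phi c hc j :=
  show fval c i < fval c j from fval_min c hc hij hci

lemma Phi_avoids231 (c : Fin n → Bool) (hc : LastF c) : Avoids231 (Phi c hc) := by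
  rintro ⟨i, j, k, hij, hjk, h1, h2⟩
  rcases Bool.dichotomy (c i) with hci | hci
  · exact absurd (Phi_lt_of_false c hc (hij.trans hjk) hci) (not_lt_of_gt h1)
  · exact absurd (Phi_lt_of_true c hc hij hci) (not_lt_of_gt h2)

lemma Phi_avoids213 (c : Fin n → Bool) (hc : LastF c) : Avoids213 (Phi c hc) := by
  rintro ⟨i, j, k, hij, hjk, h1, h2⟩
  rcases Bool.dichotomy (c i) with hci | hci
  · exact absurd (Phi_lt_of_false c hc hij hci) (not_lt_of_gt h1)
  · exact absurd (Phi_lt_of_true c hc (hij.trans hjk) hci) (not_lt_of_gt h2)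

lemma Phi_desc_iff (c : Fin n → Bool) (hc : LastF c) (i : Fin n) (h : (i : ℕ) + 1 < n) :
    Phi c hc ⟨i + 1, h⟩ < Phi c hc i ↔ c i = true := by
  constructor
  · intro hd
    rcases Bool.dichotomy (c i) with hci | hci
    · exact absurd (Phi_lt_of_false c hc (show i < ⟨i + 1, h⟩ from by
        simp [Fin.lt_def]) hci) (not_lt_of_gt hd)
    · exact hci
  · intro hci
    exact Phi_lt_of_true c hc (show i < ⟨i + 1, h⟩ from by simp [Fin.lt_def]) hci

lemma Phi_simsun (c : Fin n → Bool) (hc : LastF c) (hna : NoAdj c) : Simsun (Phi c hc) := by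
  rw [simsun_iff' (Phi_avoids231 c hc)]
  intro i h2 ⟨hd2, hd1⟩
  have hci : c i = true := (Phi_desc_iff c hc i (by omega)).mp hd1
  have h1n : ((⟨(i : ℕ) + 1, by omega⟩ : Fin n) : ℕ) + 1 < n := by simp; omega
  have hci1 : c ⟨(i : ℕ) + 1, by omega⟩ = true := by
    apply (Phi_desc_iff c hc ⟨(i : ℕ) + 1, by omega⟩ h1n).mp
    convert hd2 using 2 <;> exact Fin.ext (by simp)
  exact hna i (by omega) ⟨hci, hci1⟩





/-- descent word of a permutation -/
def dword (σ : Equiv.Perm (Fin n)) : Fin n → Bool := fun i =>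
  if h : (i : ℕ) + 1 < n then decide (σ ⟨i + 1, h⟩ < σ i) else false

lemma dword_lastF (σ : Equiv.Perm (Fin n)) : LastF (dword σ) := by
  intro i hi
  rw [dword, dif_neg (by omega)]

lemma dword_true_iff (σ : Equiv.Perm (Fin n)) (i : Fin n) (h : (i : ℕ) + 1 < n) :
    dword σ i = true ↔ σ ⟨i + 1, h⟩ < σ i := by
  rw [dword, dif_pos h]
  simp

lemma dword_noAdj {σ : Equiv.Perm (Fin n)} (hs : Simsun σ) (h231 : Avoids231 σ) :
    NoAdj (dword σ) := by
  intro i h ⟨h1, h2⟩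
  have hin : (i : ℕ) + 2 < n := by
    by_contra hcon
    exact Bool.false_ne_true ((dword_lastF σ ⟨i + 1, h⟩ (by simp; omega)).symm.trans h2)
  have hd1 : σ ⟨i + 1, by omega⟩ < σ i := (dword_true_iff σ i (by omega)).mp h1
  have hd2 : σ ⟨i + 2, hin⟩ < σ ⟨i + 1, by omega⟩ := by
    have := (dword_true_iff σ ⟨i + 1, h⟩ (by simp; omega)).mp h2
    convert this using 2 <;> exact Fin.ext (by simp)
  exact (simsun_iff' h231).mp hs i hin ⟨hd2, hd1⟩

noncomputable def mainEquiv (n : ℕ) :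
    {σ : Equiv.Perm (Fin n) // Simsun σ ∧ Avoids231 σ ∧ Avoids213 σ} ≃
    {c : Fin n → Bool // LastF c ∧ NoAdj c} where
  toFun := fun x => ⟨dword x.1, by exact ⟨dword_lastF x.1, dword_noAdj x.2.1 x.2.2.1⟩⟩
  invFun := fun ⟨c, hl, hna⟩ =>
    ⟨Phi c hl, Phi_simsun c hl hna, Phi_avoids231 c hl, Phi_avoids213 c hl⟩
  left_inv := by
    rintro ⟨σ, hs, h1, h2⟩
    apply Subtype.ext
    show Phi (dword σ) (dword_lastF σ) = σ
    apply class_ext (Phi_avoids231 _ _) (Phi_avoids213 _ _) h1 h2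
    intro i h
    rw [Phi_desc_iff _ _ i h, dword_true_iff σ i h]
  right_inv := by
    rintro ⟨c, hl, hna⟩
    apply Subtype.ext
    funext i
    show dword (Phi c hl) i = c i
    by_cases h : (i : ℕ) + 1 < n
    · rcases Bool.dichotomy (c i) with hci | hci <;> rw [hci]
      · rw [dword, dif_pos h, decide_eq_false_iff_not]
        rw [Phi_desc_iff c hl i h, hci]
        simp
      · rw [dword, dif_pos h, decide_eq_true_eq]
        exact (Phi_desc_iff c hl i h).mpr hci
    · rw [dword, dif_neg h, hl i (by have := i.isLt; omega)]





def res (c : Fin (n + 1) → Bool) : Fin n → Bool := fun i => c ⟨i, by omega⟩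

def ext' (d : Fin n → Bool) (b : Bool) : Fin (n + 1) → Bool := fun i =>
  if h : (i : ℕ) < n then d ⟨i, h⟩ else b

lemma res_ext (d : Fin n → Bool) (b : Bool) : res (ext' d b) = d := by
  funext i
  rw [res, ext', dif_pos i.isLt]

lemma ext_res (c : Fin (n + 1) → Bool) : ext' (res c) (c ⟨n, by omega⟩) = c := by
  funext i
  rw [ext']
  split
  · rfl
  · next h => congr 1; exact Fin.ext (by have := i.isLt; simp; omega)

lemma res_noAdj {c : Fin (n + 1) → Bool} (h : NoAdj c) : NoAdj (res c) := by
  intro i hi ⟨h1, h2⟩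
  apply h ⟨i, by omega⟩ (show (i : ℕ) + 1 < n + 1 by omega)
  constructor
  · exact h1
  · have : c ⟨(i : ℕ) + 1, by omega⟩ = true := h2
    convert this using 2
  
lemma res_lastF {c : Fin (n + 1) → Bool} (h : NoAdj c) (hb : c ⟨n, by omega⟩ = true) :
    LastF (res c) := by
  intro i hi
  have := h ⟨i, by omega⟩ (show (i : ℕ) + 1 < n + 1 by omega)
  rcases Bool.dichotomy (res c i) with h1 | h1
  · exact h1
  exfalso
  apply this
  refine ⟨h1, ?_⟩
  convert hb using 2
  exact Fin.ext (by simp; omega)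

lemma ext_noAdj {d : Fin n → Bool} (b : Bool) (hd : NoAdj d)
    (hb : b = true → LastF d) : NoAdj (ext' d b) := by
  intro i hi ⟨h1, h2⟩
  have hin : (i : ℕ) < n := by simpa using hi
  have h1' : d ⟨i, hin⟩ = true := by rwa [ext', dif_pos hin] at h1
  by_cases h2n : (i : ℕ) + 1 < n
  · apply hd ⟨i, hin⟩ h2n
    refine ⟨h1', ?_⟩
    have : ext' d b ⟨(i : ℕ) + 1, by omega⟩ = true := h2
    rwa [ext', dif_pos (show ((⟨(i : ℕ) + 1, by omega⟩ : Fin (n + 1)) : ℕ) < n by simpa using h2n)] at this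
  · -- i + 1 = n, neighbor is b
    have hieq : (i : ℕ) + 1 = n := by omega
    have hbt : b = true := by
      have : ext' d b ⟨(i : ℕ) + 1, by omega⟩ = true := h2
      rwa [ext', dif_neg (by simp; omega)] at this
    have := hb hbt ⟨i, hin⟩ (by simpa using hieq)
    rw [this] at h1'
    exact Bool.false_ne_true h1'

lemma ext_last (d : Fin n → Bool) (b : Bool) : ext' d b ⟨n, by omega⟩ = b := by
  rw [ext', dif_neg (by simp)]

lemma ext_lastF (d : Fin n → Bool) : LastF (ext' d false) := by
  intro i hi
  rw [ext', dif_neg (by omega)]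

def eW (n : ℕ) : {c : Fin (n + 1) → Bool // LastF c ∧ NoAdj c} ≃ {d : Fin n → Bool // NoAdj d} where
  toFun := fun ⟨c, _, hna⟩ => ⟨res c, res_noAdj hna⟩
  invFun := fun ⟨d, hd⟩ => ⟨ext' d false, ext_lastF d, ext_noAdj false hd (by simp)⟩
  left_inv := by
    rintro ⟨c, hl, hna⟩
    apply Subtype.ext
    show ext' (res c) false = c
    have hlast : c ⟨n, by omega⟩ = false := hl _ (by simp)
    rw [← hlast]
    exact ext_res c
  right_inv := by
    rintro ⟨d, hd⟩
    exact Subtype.ext (res_ext d false)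

noncomputable def eSplit (n : ℕ) : {c : Fin (n + 1) → Bool // NoAdj c} ≃
    {d : Fin n → Bool // NoAdj d} ⊕ {d : Fin n → Bool // LastF d ∧ NoAdj d} where
  toFun := fun ⟨c, hna⟩ =>
    if hb : c ⟨n, by omega⟩ = true then Sum.inr ⟨res c, res_lastF hna hb, res_noAdj hna⟩
    else Sum.inl ⟨res c, res_noAdj hna⟩
  invFun := fun s => match s with
    | Sum.inl ⟨d, hd⟩ => ⟨ext' d false, ext_noAdj false hd (by simp)⟩
    | Sum.inr ⟨d, hl, hd⟩ => ⟨ext' d true, ext_noAdj true hd (fun _ => hl)⟩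
  left_inv := by
    rintro ⟨c, hna⟩
    dsimp only
    by_cases hb : c ⟨n, by omega⟩ = true
    · rw [dif_pos hb]
      apply Subtype.ext
      show ext' (res c) true = c
      rw [← hb]
      exact ext_res c
    · rw [dif_neg hb]
      apply Subtype.ext
      show ext' (res c) false = c
      have hf : c ⟨n, by omega⟩ = false := by
        rcases Bool.dichotomy (c ⟨n, by omega⟩) with h | h
        · exact h
        · exact absurd h hb
      rw [← hf]
      exact ext_res c
  right_inv := by
    rintro (⟨d, hd⟩ | ⟨d, hl, hd⟩) <;> dsimp only
    · rw [dif_neg (by rw [ext_last]; simp)]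
      exact congrArg Sum.inl (Subtype.ext (res_ext d false))
    · rw [dif_pos (ext_last d true)]
      exact congrArg Sum.inr (Subtype.ext (res_ext d true))

noncomputable def wcnt (n : ℕ) : ℕ := Nat.card {c : Fin n → Bool // LastF c ∧ NoAdj c}
noncomputable def vcnt (n : ℕ) : ℕ := Nat.card {c : Fin n → Bool // NoAdj c}

lemma wcnt_succ (n : ℕ) : wcnt (n + 1) = vcnt n := Nat.card_congr (eW n)

lemma vcnt_succ (n : ℕ) : vcnt (n + 1) = vcnt n + wcnt n := by
  rw [vcnt, Nat.card_congr (eSplit n), Nat.card_sum]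
  rfl

lemma vcnt_zero : vcnt 0 = 1 := by
  have e : {c : Fin 0 → Bool // NoAdj c} ≃ (Fin 0 → Bool) :=
    Equiv.subtypeUnivEquiv fun c => (fun i => i.elim0 : NoAdj c)
  rw [vcnt, Nat.card_congr e, Nat.card_eq_fintype_card]
  simp

lemma wcnt_zero : wcnt 0 = 1 := by
  have e : {c : Fin 0 → Bool // LastF c ∧ NoAdj c} ≃ (Fin 0 → Bool) :=
    Equiv.subtypeUnivEquiv fun c => ⟨(fun i => i.elim0 : LastF c), (fun i => i.elim0 : NoAdj c)⟩
  rw [wcnt, Nat.card_congr e, Nat.card_eq_fintype_card]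
  simp

lemma wcnt_eq_fib : ∀ n : ℕ, vcnt n = Nat.fib (n + 2) ∧ wcnt n = Nat.fib (n + 1) := by
  intro n
  induction n with
  | zero => exact ⟨by rw [vcnt_zero, Nat.fib_two], by rw [wcnt_zero, Nat.fib_one]⟩
  | succ m ih =>
    refine ⟨?_, ?_⟩
    · show vcnt (m + 1) = Nat.fib (m + 3)
      have h3 : Nat.fib (m + 3) = Nat.fib (m + 1) + Nat.fib (m + 2) := Nat.fib_add_two
      rw [vcnt_succ, ih.1, ih.2]
      omega
    · rw [wcnt_succ, ih.1]


end SimsunAux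

/-- The number of simsun permutations in `S_n` avoiding both 231 and 213
equals the Fibonacci number `F_{n+1}`. -/
theorem card_simsun_avoid231_213_eq_fib (n : ℕ) :
    Nat.card {σ : Equiv.Perm (Fin n) // Simsun σ ∧ Avoids231 σ ∧ Avoids213 σ} =
      Nat.fib (n + 1) := by
  rw [Nat.card_congr (SimsunAux.mainEquiv n)]
  exact (SimsunAux.wcnt_eq_fib n).2
end

section
/- Let σ ∈ S_n be double simsun and let Γ(σ)_i = n+1−σ^{-1}_{n+1−i}. If Γ(σ) is not double simsun, then σ contains a 35142-pattern (equivalently, Γ(σ) contains a 42513-pattern). -/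
/-- `Γ(σ)_i = n + 1 - σ⁻¹_{n+1-i}` (0-indexed: `Γ(σ) i = rev (σ⁻¹ (rev i))`). -/
def Gamma {n : ℕ} (σ : Equiv.Perm (Fin n)) : Equiv.Perm (Fin n) :=
  (Fin.revPerm.trans σ⁻¹).trans Fin.revPerm


/-! ### Auxiliary lemmas -/

/-- A "top double descent": for some threshold `K`, three positions `i < j < l`
carrying decreasing values all `≥ K`, with all intermediate values `< K`. -/
def TopDD {n : ℕ} (τ : Equiv.Perm (Fin n)) : Prop :=
  ∃ K : ℕ, ∃ i j l : Fin n, i < j ∧ j < l ∧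
    K ≤ (τ i).val ∧ K ≤ (τ j).val ∧ K ≤ (τ l).val ∧
    τ l < τ j ∧ τ j < τ i ∧
    (∀ m : Fin n, i < m → m < j → (τ m).val < K) ∧
    (∀ m : Fin n, j < m → m < l → (τ m).val < K)

lemma gamma_apply {n : ℕ} (σ : Equiv.Perm (Fin n)) (m : Fin n) :
    Gamma σ m = (σ⁻¹ m.rev).rev := rfl

lemma gamma_inv {n : ℕ} (σ : Equiv.Perm (Fin n)) : (Gamma σ)⁻¹ = Gamma σ⁻¹ := by
  ext x
  simp [Gamma, Equiv.Perm.inv_def, Equiv.symm_trans_apply, Fin.revPerm_symm]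

lemma topDD_of_not_simsun_gamma {n : ℕ} (σ : Equiv.Perm (Fin n))
    (h : ¬ Simsun (Gamma σ)) : TopDD σ⁻¹ := by
  rw [Simsun] at h
  push_neg at h
  obtain ⟨k, i, j, l, hij, hjl, hik, hjk, hlk, hlj, hji, g1, g2⟩ := h
  simp only [gamma_apply, Fin.val_rev, Fin.rev_lt_rev] at hik hjk hlk hlj hji g1 g2
  refine ⟨n - k, l.rev, j.rev, i.rev, Fin.rev_lt_rev.mpr hjl, Fin.rev_lt_rev.mpr hij,
    ?_, ?_, ?_, hji, hlj, ?_, ?_⟩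
  · have := (σ⁻¹ l.rev).isLt; omega
  · have := (σ⁻¹ j.rev).isLt; omega
  · have := (σ⁻¹ i.rev).isLt; omega
  · intro m hm1 hm2
    rw [← Fin.rev_rev m] at hm1 hm2
    have := g2 m.rev (Fin.rev_lt_rev.mp hm2) (Fin.rev_lt_rev.mp hm1)
    rw [Fin.rev_rev] at this
    have := (σ⁻¹ m).isLt; omega
  · intro m hm1 hm2
    rw [← Fin.rev_rev m] at hm1 hm2
    have := g1 m.rev (Fin.rev_lt_rev.mp hm2) (Fin.rev_lt_rev.mp hm1)
    rw [Fin.rev_rev] at this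
    have := (σ⁻¹ m).isLt; omega

lemma contains_of_topDD {n : ℕ} (τ : Equiv.Perm (Fin n))
    (h1 : Simsun τ) (h2 : Simsun τ⁻¹) (h3 : TopDD τ) : Contains35142 τ := by
  classical
  obtain ⟨K, i, j, l, hij, hjl, hiK, hjK, hlK, hlj, hji, g1, g2⟩ := h3
  -- Step 1: there is a small value strictly between positions i and j
  have hp : ∃ p : Fin n, i < p ∧ p < j ∧ (τ p).val < K := by
    by_contra hp
    push_neg at hp
    -- then j = i + 1
    have hij1 : j.val = i.val + 1 := by
      by_contra hne
      have hm : i.val + 1 < n := lt_of_le_of_lt (Nat.succ_le_of_lt hij) j.isLt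
      have h1' : i < (⟨i.val + 1, hm⟩ : Fin n) := by simp [Fin.lt_def]
      have h2' : (⟨i.val + 1, hm⟩ : Fin n) < j := by
        rw [Fin.lt_def] at hij ⊢; simp; omega
      exact absurd (g1 _ h1' h2') (not_lt.mpr (hp _ h1' h2'))
    have hln : j.val + 1 < n := lt_of_le_of_lt (Nat.succ_le_of_lt hjl) l.isLt
    set t : Fin n := ⟨j.val + 1, hln⟩ with ht
    have hjt : j < t := by simp [Fin.lt_def, ht]
    have htτ : τ t < τ j := by
      rcases eq_or_lt_of_le (show t.val ≤ l.val from hjl) with he | hlt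
      · rw [show t = l from Fin.ext he]; exact hlj
      · have := g2 t hjt hlt
        rw [Fin.lt_def]; omega
    refine h1 n ⟨i, j, t, hij, hjt, (τ i).isLt, (τ j).isLt, (τ t).isLt, htτ, hji, ?_, ?_⟩
    · intro m hm1 hm2; rw [Fin.lt_def] at hm1 hm2; omega
    · intro m hm1 hm2; rw [Fin.lt_def] at hm1 hm2; simp [ht] at hm2; omega
  -- Step 2: there is a value strictly between τ l and τ j at a position before i
  have hd : ∃ p : Fin n, p < i ∧ τ l < τ p ∧ τ p < τ j := by
    by_contra hd
    push_neg at hd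
    -- choose e: minimal value in (τ j, τ i] whose position is ≤ i
    have he : ∃ e : Fin n, τ j < e ∧ e ≤ τ i ∧ (τ⁻¹ e).val ≤ i.val ∧
        ∀ w : Fin n, τ j < w → w < e → ¬ (τ⁻¹ w < i) := by
      by_cases hS : ∃ v : Fin n, τ j < v ∧ v < τ i ∧ τ⁻¹ v < i
      · obtain ⟨v0, hv01, hv02, hv03⟩ := hS
        set S : Finset (Fin n) :=
          Finset.univ.filter (fun v => τ j < v ∧ v < τ i ∧ τ⁻¹ v < i) with hSdef
        have hne : S.Nonempty := ⟨v0, by simp [hSdef, hv01, hv02, hv03]; exact hv03⟩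
        have hmem := S.min'_mem hne
        simp only [hSdef, Finset.mem_filter, Finset.mem_univ, true_and] at hmem
        refine ⟨S.min' hne, hmem.1, le_of_lt hmem.2.1, le_of_lt hmem.2.2, ?_⟩
        intro w hw1 hw2 hw3
        have hwS : w ∈ S := by
          simp only [hSdef, Finset.mem_filter, Finset.mem_univ, true_and]
          exact ⟨hw1, lt_trans hw2 hmem.2.1, hw3⟩
        exact absurd (S.min'_le w hwS) (not_le.mpr hw2)
      · refine ⟨τ i, hji, le_refl _, by simp, ?_⟩
        intro w hw1 hw2 hw3
        exact hS ⟨w, hw1, hw2, hw3⟩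
    obtain ⟨e, hej, heτi, hei, hemin⟩ := he
    have hilv : i.val < l.val := lt_trans hij hjl
    refine h2 (l.val + 1) ⟨τ l, τ j, e, hlj, hej, ?_, ?_, ?_, ?_, ?_, ?_, ?_⟩
    · simp
    · simp; rw [Fin.lt_def] at hjl; omega
    · omega
    · have := (show ((Equiv.symm τ) e).val ≤ i.val from hei)
      rw [Fin.lt_def]; simp; rw [Fin.lt_def] at hij; omega
    · simp; exact hjl
    · -- gap between τ l and τ j: all such values sit at positions > l
      intro m hm1 hm2
      by_contra hq
      push_neg at hq
      have hτq : τ (τ⁻¹ m) = m := Equiv.apply_symm_apply τ m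
      set q := τ⁻¹ m with hqdef
      rcases lt_trichotomy q i with hqi | hqi | hqi
      · have := hd q hqi (by rw [hτq]; exact hm1)
        rw [hτq] at this
        exact absurd hm2 (not_lt.mpr this)
      · rw [hqi] at hτq
        rw [← hτq] at hm2
        exact absurd (lt_trans hm2 hji) (lt_irrefl _)
      · rcases lt_trichotomy q j with hqj | hqj | hqj
        · have := g1 q hqi hqj
          rw [hτq] at this
          rw [Fin.lt_def] at hm1; omega
        · rw [hqj] at hτq; rw [hτq] at hm2; exact absurd hm2 (lt_irrefl _)
        · rcases lt_trichotomy q l with hql | hql | hql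
          · have := g2 q hqj hql
            rw [hτq] at this
            rw [Fin.lt_def] at hm1; omega
          · rw [hql] at hτq; rw [hτq] at hm1; exact absurd hm1 (lt_irrefl _)
          · rw [Fin.lt_def] at hql; omega
    · -- gap between τ j and e: all such values sit at positions > l
      intro m hm1 hm2
      by_contra hq
      push_neg at hq
      have hτq : τ (τ⁻¹ m) = m := Equiv.apply_symm_apply τ m
      set q := τ⁻¹ m with hqdef
      rcases lt_trichotomy q i with hqi | hqi | hqi
      · exact hemin m hm1 hm2 hqi
      · rw [hqi] at hτq
        rw [← hτq] at hm2
        exact absurd (lt_of_lt_of_le hm2 heτi) (lt_irrefl _)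
      · rcases lt_trichotomy q j with hqj | hqj | hqj
        · have := g1 q hqi hqj
          rw [hτq] at this
          rw [Fin.lt_def] at hm1; omega
        · rw [hqj] at hτq; rw [hτq] at hm1; exact absurd hm1 (lt_irrefl _)
        · rcases lt_trichotomy q l with hql | hql | hql
          · have := g2 q hqj hql
            rw [hτq] at this
            rw [Fin.lt_def] at hm1; omega
          · rw [hql] at hτq; rw [← hτq] at hm1
            exact absurd (lt_trans hlj hm1) (lt_irrefl _)
          · rw [Fin.lt_def] at hql; omega
  obtain ⟨p, hip, hpj, hpK⟩ := hp
  obtain ⟨q, hqi, hlq, hqj⟩ := hd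
  exact ⟨q, i, p, j, l, hqi, hip, hpj, hjl,
    by rw [Fin.lt_def]; omega, hlq, hqj, hji⟩

lemma contains35142_inv {n : ℕ} (τ : Equiv.Perm (Fin n))
    (h : Contains35142 τ) : Contains35142 τ⁻¹ := by
  obtain ⟨i1, i2, i3, i4, i5, h12, h23, h34, h45, v35, v51, v14, v42⟩ := h
  refine ⟨τ i3, τ i5, τ i1, τ i4, τ i2, v35, v51, v14, v42, ?_, ?_, ?_, ?_⟩ <;>
    simp only [Equiv.Perm.inv_def, Equiv.symm_apply_apply]
  · exact h12
  · exact h23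
  · exact h34
  · exact h45

lemma contains42513_gamma {n : ℕ} (σ : Equiv.Perm (Fin n))
    (h : Contains35142 σ⁻¹) : Contains42513 (Gamma σ) := by
  obtain ⟨i1, i2, i3, i4, i5, h12, h23, h34, h45, v35, v51, v14, v42⟩ := h
  refine ⟨i5.rev, i4.rev, i3.rev, i2.rev, i1.rev,
    Fin.rev_lt_rev.mpr h45, Fin.rev_lt_rev.mpr h34, Fin.rev_lt_rev.mpr h23,
    Fin.rev_lt_rev.mpr h12, ?_, ?_, ?_, ?_⟩ <;>
    simp only [gamma_apply, Fin.rev_rev, Fin.rev_lt_rev]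
  · exact v42
  · exact v14
  · exact v51
  · exact v35

/-- If `σ` is double simsun and `Γ(σ)` is not double simsun, then `σ`
contains a 35142-pattern (equivalently, `Γ(σ)` contains a 42513-pattern). -/
theorem contains35142_of_gamma_not_doubleSimsun {n : ℕ} (σ : Equiv.Perm (Fin n))
    (hσ : DoubleSimsun σ) (h : ¬ DoubleSimsun (Gamma σ)) :
    Contains35142 σ ∧ Contains42513 (Gamma σ) := by
  rw [DoubleSimsun, not_and_or] at h
  have c1 : Contains35142 σ := by
    rcases h with h | h
    · have hs : Contains35142 σ⁻¹ :=
        contains_of_topDD σ⁻¹ hσ.2 (by rw [inv_inv]; exact hσ.1)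
          (topDD_of_not_simsun_gamma σ h)
      have := contains35142_inv σ⁻¹ hs
      rwa [inv_inv] at this
    · have h' : ¬ Simsun (Gamma σ⁻¹) := by rw [← gamma_inv]; exact h
      have ht := topDD_of_not_simsun_gamma σ⁻¹ h'
      rw [inv_inv] at ht
      exact contains_of_topDD σ hσ.1 hσ.2 ht
  exact ⟨c1, contains42513_gamma σ (contains35142_inv σ c1)⟩
end

section
/- Every 312-avoiding simsun permutation is double simsun; that is, the set of 312-avoiding simsun permutations in S_n equals the set of 312-avoiding double simsun permutations in S_n. -/
/-- Every 312-avoiding simsun permutation is double simsun: the set of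
312-avoiding simsun permutations equals the set of 312-avoiding double simsun
permutations. -/
theorem avoid312_simsun_eq_doubleSimsun (n : ℕ) :
    {σ : Equiv.Perm (Fin n) | Avoids312 σ ∧ Simsun σ} =
      {σ : Equiv.Perm (Fin n) | Avoids312 σ ∧ DoubleSimsun σ} := by
  ext σ
  simp only [Set.mem_setOf_eq]
  constructor
  · rintro ⟨h312, hs⟩
    refine ⟨h312, hs, ?_⟩
    rintro k ⟨i, j, l, hij, hjl, hi, hj, hl, hlj, hji, g1, g2⟩
    have hσa : σ (σ⁻¹ i) = i := σ.apply_symm_apply i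
    have hσb : σ (σ⁻¹ j) = j := σ.apply_symm_apply j
    have hσc : σ (σ⁻¹ l) = l := σ.apply_symm_apply l
    apply hs (l.val + 1)
    refine ⟨σ⁻¹ l, σ⁻¹ j, σ⁻¹ i, hlj, hji, ?_, ?_, ?_, ?_, ?_, ?_, ?_⟩
    · rw [hσc]; omega
    · rw [hσb]; exact Nat.lt_succ_of_lt hjl
    · rw [hσa]; exact Nat.lt_succ_of_lt (hij.trans hjl)
    · rw [hσa, hσb]; exact hij
    · rw [hσb, hσc]; exact hjl
    · -- gap between σ⁻¹ l and σ⁻¹ j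
      intro m hcm hmb
      by_contra hcon
      have hmv : (σ m).val < l.val + 1 := by omega
      have hmlv : (σ m).val ≤ l.val := Nat.lt_succ_iff.mp hmv
      have hml : σ m ≠ l := by
        intro h
        exact absurd (σ.injective (h.trans hσc.symm)) (ne_of_gt hcm)
      have hml' : σ m < l := lt_of_le_of_ne (Fin.le_def.mpr hmlv) hml
      have hmj : σ m ≠ j := by
        intro h
        exact absurd (σ.injective (h.trans hσb.symm)) (ne_of_lt hmb)
      rcases hmj.lt_or_gt with h1 | h1
      · exact h312 ⟨σ⁻¹ l, m, σ⁻¹ j, hcm, hmb,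
          by rw [hσb]; exact h1, by rw [hσb, hσc]; exact hjl⟩
      · have hk := g2 (σ m) h1 hml'
        rw [show σ⁻¹ (σ m) = m from σ.symm_apply_apply m] at hk
        have h2 : m.val < (σ⁻¹ j).val := hmb
        omega
    · -- gap between σ⁻¹ j and σ⁻¹ i
      intro m hbm hma
      by_contra hcon
      have hmv : (σ m).val < l.val + 1 := by omega
      have hmlv : (σ m).val ≤ l.val := Nat.lt_succ_iff.mp hmv
      have hml : σ m ≠ l := by
        intro h
        exact absurd (σ.injective (h.trans hσc.symm))
          (ne_of_gt (hlj.trans hbm))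
      have hml' : σ m < l := lt_of_le_of_ne (Fin.le_def.mpr hmlv) hml
      have hmj : σ m ≠ j := by
        intro h
        exact absurd (σ.injective (h.trans hσb.symm)) (ne_of_gt hbm)
      have hmi : σ m ≠ i := by
        intro h
        exact absurd (σ.injective (h.trans hσa.symm)) (ne_of_lt hma)
      rcases hmi.lt_or_gt with h1 | h1
      · -- σ m < i : 312 pattern at (σ⁻¹ j, m, σ⁻¹ i)
        exact h312 ⟨σ⁻¹ j, m, σ⁻¹ i, hbm, hma,
          by rw [hσa]; exact h1, by rw [hσa, hσb]; exact hij⟩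
      · rcases hmj.lt_or_gt with h2 | h2
        · -- i < σ m < j : gap condition g1
          have hk := g1 (σ m) h1 h2
          rw [show σ⁻¹ (σ m) = m from σ.symm_apply_apply m] at hk
          have h3 : m.val < (σ⁻¹ i).val := hma
          omega
        · -- j < σ m < l : gap condition g2
          have hk := g2 (σ m) h2 hml'
          rw [show σ⁻¹ (σ m) = m from σ.symm_apply_apply m] at hk
          have h3 : m.val < (σ⁻¹ i).val := hma
          omega
  · rintro ⟨h312, hd⟩
    exact ⟨h312, hd.1⟩
end

section
/- The number of 312-avoiding simsun permutations in S_n is 2^{n-1}, and the same holds for 231-avoiding double simsun permutations in S_n. -/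
section Aux
open Equiv Finset

/-- The key structural property: every value exceeds its position by at most one. -/
def StepLE {n : ℕ} (σ : Equiv.Perm (Fin n)) : Prop :=
  ∀ x : Fin n, (σ x).val ≤ x.val + 1

lemma stepLE_pigeon {n : ℕ} {σ : Equiv.Perm (Fin n)} (hP : StepLE σ)
    {i j k : Fin n} (hj : i < j) (hk : i < k) (hjk : j ≠ k)
    (hsj : (σ j).val ≤ i.val) (hsk : (σ k).val ≤ i.val) : False := by
  have hjn : i.val + 1 < n := lt_of_le_of_lt (Nat.succ_le_of_lt hj) j.isLt
  set T : Finset (Fin n) := insert j (insert k (Finset.Iic i)) with hT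
  have hmaps : ∀ z ∈ T, σ z ∈ Finset.Iic (⟨i.val + 1, hjn⟩ : Fin n) := by
    intro z hz
    rw [Finset.mem_Iic, Fin.le_def]
    have hgoal : ((⟨i.val + 1, hjn⟩ : Fin n)).val = i.val + 1 := rfl
    rw [hgoal]
    simp only [hT, Finset.mem_insert, Finset.mem_Iic, Fin.le_def] at hz
    rcases hz with rfl | rfl | hz
    · omega
    · omega
    · have := hP z; omega
  have hcard := Finset.card_le_card_of_injOn σ hmaps (σ.injective.injOn)
  have h1 : j ∉ insert k (Finset.Iic i) := by
    simp only [Finset.mem_insert, Finset.mem_Iic]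
    push_neg
    exact ⟨hjk, hj⟩
  have h2 : k ∉ Finset.Iic i := by
    simp only [Finset.mem_Iic]
    exact not_le.mpr hk
  have hv : ((⟨i.val + 1, hjn⟩ : Fin n)).val = i.val + 1 := rfl
  rw [Finset.card_insert_of_notMem h1, Finset.card_insert_of_notMem h2,
    Fin.card_Iic, Fin.card_Iic, hv] at hcard
  omega

lemma avoids312_of_stepLE {n : ℕ} {σ : Equiv.Perm (Fin n)} (hP : StepLE σ) :
    Avoids312 σ := by
  rintro ⟨i, j, k, hij, hjk, h1, h2⟩
  have hi := hP i
  rw [Fin.lt_def] at h1 h2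
  exact stepLE_pigeon hP hij (hij.trans hjk) (ne_of_lt hjk)
    (by omega) (by omega)

lemma avoids321_of_stepLE {n : ℕ} {σ : Equiv.Perm (Fin n)} (hP : StepLE σ) :
    Avoids321 σ := by
  rintro ⟨i, j, k, hij, hjk, h1, h2⟩
  have hi := hP i
  rw [Fin.lt_def] at h1 h2
  exact stepLE_pigeon hP hij (hij.trans hjk) (ne_of_lt hjk)
    (by omega) (by omega)

lemma stepLE_of_avoids {n : ℕ} {σ : Equiv.Perm (Fin n)}
    (h312 : Avoids312 σ) (h321 : Avoids321 σ) : StepLE σ := by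
  intro x
  by_contra hx
  push_neg at hx
  have hxn : x.val + 1 < n := by have := (σ x).isLt; omega
  set U : Finset (Fin n) := Finset.univ.filter
    (fun p : Fin n => (σ p).val ≤ x.val + 1) with hU
  have himg : U.image σ = Finset.Iic (⟨x.val + 1, hxn⟩ : Fin n) := by
    ext w
    simp only [Finset.mem_image, hU, Finset.mem_filter, Finset.mem_univ, true_and,
      Finset.mem_Iic, Fin.le_def]
    constructor
    · rintro ⟨p, hp, rfl⟩; exact hp
    · intro hw
      exact ⟨σ⁻¹ w, by simp [hw], by simp⟩
  have hUcard : U.card = x.val + 2 := by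
    have := Finset.card_image_of_injective U σ.injective
    have hv : ((⟨x.val + 1, hxn⟩ : Fin n)).val = x.val + 1 := rfl
    rw [himg, Fin.card_Iic, hv] at this
    omega
  set W : Finset (Fin n) := Finset.univ.filter
    (fun p : Fin n => (σ p).val ≤ x.val + 1 ∧ x < p) with hW
  have hsub : U ⊆ W ∪ Finset.Iio x := by
    intro p hp
    simp only [hU, Finset.mem_filter, Finset.mem_univ, true_and] at hp
    simp only [Finset.mem_union, hW, Finset.mem_filter, Finset.mem_univ, true_and,
      Finset.mem_Iio]
    rcases lt_trichotomy x p with h | h | h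
    · exact Or.inl ⟨hp, h⟩
    · exfalso; subst h; omega
    · exact Or.inr h
  have hcard2 : U.card ≤ W.card + x.val := by
    calc U.card ≤ (W ∪ Finset.Iio x).card := Finset.card_le_card hsub
    _ ≤ W.card + (Finset.Iio x).card := Finset.card_union_le _ _
    _ = W.card + x.val := by rw [Fin.card_Iio]
  have h2W : 1 < W.card := by omega
  obtain ⟨p, hp, q, hq, hpq⟩ := Finset.one_lt_card.mp h2W
  simp only [hW, Finset.mem_filter, Finset.mem_univ, true_and] at hp hq
  have key : ∀ a b : Fin n, a < b → (σ a).val ≤ x.val + 1 → (σ b).val ≤ x.val + 1 →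
      x < a → False := by
    intro a b hab ha hb hxa
    rcases lt_trichotomy (σ a) (σ b) with h | h | h
    · exact h312 ⟨x, a, b, hxa, hab, h, by rw [Fin.lt_def]; omega⟩
    · exact absurd (σ.injective h) (ne_of_lt hab)
    · exact h321 ⟨x, a, b, hxa, hab, h, by rw [Fin.lt_def]; omega⟩
  rcases lt_trichotomy p q with h | h | h
  · exact key p q h hp.1 hq.1 hp.2
  · exact hpq h
  · exact key q p h hq.1 hp.1 hq.2

lemma simsun_of_avoids321 {n : ℕ} {σ : Equiv.Perm (Fin n)} (h : Avoids321 σ) :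
    Simsun σ := by
  rintro k ⟨i, j, l, hij, hjl, _, _, _, h1, h2, _, _⟩
  exact h ⟨i, j, l, hij, hjl, h1, h2⟩

lemma avoids321_of_simsun {n : ℕ} {σ : Equiv.Perm (Fin n)}
    (h312 : Avoids312 σ) (hss : Simsun σ) : Avoids321 σ := by
  by_contra h
  rw [Avoids321, not_not] at h
  have hex : ∃ d : ℕ, ∃ i j l : Fin n, i < j ∧ j < l ∧ σ l < σ j ∧ σ j < σ i ∧
      l.val - i.val = d := by
    obtain ⟨i, j, l, h1, h2, h3, h4⟩ := h
    exact ⟨l.val - i.val, i, j, l, h1, h2, h3, h4, rfl⟩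
  obtain ⟨i, j, l, hij, hjl, hlj, hji, hd⟩ := Nat.find_spec hex
  -- every element strictly between i and l other than j has value > σ i
  have key : ∀ m : Fin n, i < m → m < l → m ≠ j → σ i < σ m := by
    intro m him hml hmj
    by_contra hle
    push_neg at hle
    have hmi : σ m ≠ σ i := fun hh => (ne_of_gt him) (σ.injective hh)
    have hmlt : σ m < σ i := lt_of_le_of_ne hle hmi
    rcases lt_trichotomy (σ m) (σ l) with hc | hc | hc
    · exact h312 ⟨i, m, l, him, hml, hc, hlj.trans hji⟩
    · exact absurd (σ.injective hc) (ne_of_lt hml)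
    · -- two "middles": m and j, both with value in (σ l, σ i)
      have key2 : ∀ a b : Fin n, i < a → a < b → b < l →
          σ l < σ b → σ a < σ i → σ b < σ i → False := by
        intro a b hia hab hbl hlb hai hbi
        rcases lt_trichotomy (σ a) (σ b) with hc2 | hc2 | hc2
        · exact h312 ⟨i, a, b, hia, hab, hc2, hbi⟩
        · exact absurd (σ.injective hc2) (ne_of_lt hab)
        · -- smaller-span 321 at (a, b, l)
          have : l.val - a.val < l.val - i.val := by
            have := Fin.lt_def.mp hia
            have := Fin.lt_def.mp (hab.trans hbl)
            omega
          exact Nat.find_min hex (hd ▸ this) ⟨a, b, l, hab, hbl, hlb, hc2, rfl⟩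
      rcases lt_or_gt_of_ne hmj with hcase | hcase
      · exact key2 m j him hcase hjl hlj hmlt hji
      · exact key2 j m hij hcase hml hc hji hmlt
  apply hss ((σ i).val + 1)
  have hji' := Fin.lt_def.mp hji
  have hlj' := Fin.lt_def.mp hlj
  refine ⟨i, j, l, hij, hjl, by omega, by omega, by omega, hlj, hji, ?_, ?_⟩
  · intro m h1 h2
    have := key m h1 (h2.trans hjl) (ne_of_lt h2)
    rw [Fin.lt_def] at this; omega
  · intro m h1 h2
    have := key m (hij.trans h1) h2 (ne_of_gt h1)
    rw [Fin.lt_def] at this; omega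

lemma avoids231_iff_inv {n : ℕ} (σ : Equiv.Perm (Fin n)) :
    Avoids231 σ ↔ Avoids312 σ⁻¹ := by
  constructor
  · rintro h ⟨a, b, c, hab, hbc, h1, h2⟩
    exact h ⟨σ⁻¹ b, σ⁻¹ c, σ⁻¹ a, h1, h2, by simpa using hab, by simpa using hbc⟩
  · rintro h ⟨i, j, k, hij, hjk, h1, h2⟩
    exact h ⟨σ k, σ i, σ j, h1, h2, by simpa using hij, by simpa using hjk⟩

lemma avoids321_inv {n : ℕ} {σ : Equiv.Perm (Fin n)} (h : Avoids321 σ) :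
    Avoids321 σ⁻¹ := by
  rintro ⟨a, b, c, hab, hbc, h1, h2⟩
  exact h ⟨σ⁻¹ c, σ⁻¹ b, σ⁻¹ a, h1, h2, by simpa using hab, by simpa using hbc⟩

lemma A_iff {n : ℕ} (σ : Equiv.Perm (Fin n)) :
    (Avoids312 σ ∧ Simsun σ) ↔ StepLE σ := by
  constructor
  · rintro ⟨h312, hss⟩
    exact stepLE_of_avoids h312 (avoids321_of_simsun h312 hss)
  · intro hP
    exact ⟨avoids312_of_stepLE hP, simsun_of_avoids321 (avoids321_of_stepLE hP)⟩

lemma B_iff {n : ℕ} (σ : Equiv.Perm (Fin n)) :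
    (Avoids231 σ ∧ DoubleSimsun σ) ↔ StepLE σ⁻¹ := by
  constructor
  · rintro ⟨h231, _, hsi⟩
    exact (A_iff σ⁻¹).mp ⟨(avoids231_iff_inv σ).mp h231, hsi⟩
  · intro hP
    have h312 := avoids312_of_stepLE hP
    have h321 := avoids321_of_stepLE hP
    have h321' : Avoids321 σ := by simpa using avoids321_inv h321
    exact ⟨(avoids231_iff_inv σ).mpr h312, simsun_of_avoids321 h321',
      simsun_of_avoids321 h321⟩

lemma stepLE_decompose {n : ℕ} (p : Fin (n + 1)) (e : Equiv.Perm (Fin n)) :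
    StepLE (Equiv.Perm.decomposeFin.symm (p, e)) ↔ (p.val ≤ 1 ∧ StepLE e) := by
  constructor
  · intro h
    have h0 := h 0
    rw [Equiv.Perm.decomposeFin_symm_apply_zero] at h0
    have h0' : p.val ≤ 1 := by simpa using h0
    refine ⟨h0', fun i => ?_⟩
    have hi := h i.succ
    rw [Equiv.Perm.decomposeFin_symm_apply_succ] at hi
    have hv2 : ((e i).succ).val = (e i).val + 1 := rfl
    have hv3 : (i.succ).val = i.val + 1 := rfl
    by_cases hc : (e i).succ = p
    · have hv : p.val = (e i).val + 1 := by rw [← hc]; exact hv2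
      omega
    · rw [Equiv.swap_apply_of_ne_of_ne (Fin.succ_ne_zero _) hc] at hi
      omega
  · rintro ⟨hp, he⟩ x
    induction x using Fin.cases with
    | zero => rw [Equiv.Perm.decomposeFin_symm_apply_zero]; simpa using hp
    | succ i =>
      rw [Equiv.Perm.decomposeFin_symm_apply_succ]
      by_cases hc : (e i).succ = p
      · rw [hc, Equiv.swap_apply_right]
        simp
      · rw [Equiv.swap_apply_of_ne_of_ne (Fin.succ_ne_zero _) hc]
        have := he i
        have hv2 : ((e i).succ).val = (e i).val + 1 := rfl
        have hv3 : (i.succ).val = i.val + 1 := rfl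
        omega

end Aux

lemma card_stepLE (n : ℕ) :
    Nat.card {σ : Equiv.Perm (Fin (n + 1)) // StepLE σ} = 2 ^ n := by
  induction n with
  | zero =>
    haveI : Subsingleton (Equiv.Perm (Fin 1)) :=
      ⟨fun a b => Equiv.ext fun x => Subsingleton.elim _ _⟩
    haveI : Unique {σ : Equiv.Perm (Fin 1) // StepLE σ} :=
      uniqueOfSubsingleton ⟨1, fun x => by simp⟩
    simp [Nat.card_unique]
  | succ m ih =>
    have hiff : ∀ σ : Equiv.Perm (Fin (m + 2)), StepLE σ ↔
        ((Equiv.Perm.decomposeFin σ).1.val ≤ 1 ∧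
          StepLE (Equiv.Perm.decomposeFin σ).2) := by
      intro σ
      have := stepLE_decompose (Equiv.Perm.decomposeFin σ).1
        (Equiv.Perm.decomposeFin σ).2
      rwa [Prod.mk.eta, Equiv.symm_apply_apply] at this
    have e1 : {σ : Equiv.Perm (Fin (m + 2)) // StepLE σ} ≃
        {q : Fin (m + 2) × Equiv.Perm (Fin (m + 1)) //
          q.1.val ≤ 1 ∧ StepLE q.2} :=
      Equiv.Perm.decomposeFin.subtypeEquiv hiff
    have e2 : {q : Fin (m + 2) × Equiv.Perm (Fin (m + 1)) //
          q.1.val ≤ 1 ∧ StepLE q.2} ≃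
        {p : Fin (m + 2) // p.val ≤ 1} × {e : Equiv.Perm (Fin (m + 1)) // StepLE e} :=
      Equiv.subtypeProdEquivProd (p := fun p : Fin (m + 2) => p.val ≤ 1)
        (q := StepLE)
    have e3 : {p : Fin (m + 2) // p.val ≤ 1} ≃ Fin 2 :=
      { toFun := fun q => ⟨q.1.val, by omega⟩
        invFun := fun v => ⟨⟨v.val, by have := v.isLt; omega⟩,
          by have := v.isLt; show v.val ≤ 1; omega⟩
        left_inv := fun q => by ext; simp
        right_inv := fun v => by ext; simp }
    rw [Nat.card_congr (e1.trans e2), Nat.card_prod, Nat.card_congr e3, ih]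
    simp [Nat.card_eq_fintype_card]
    ring

/-- The number of 312-avoiding simsun permutations in `S_n` is `2^{n-1}`, and
so is the number of 231-avoiding double simsun permutations. -/
theorem card_avoid312_simsun_eq_two_pow (n : ℕ) (hn : 1 ≤ n) :
    Nat.card {σ : Equiv.Perm (Fin n) // Avoids312 σ ∧ Simsun σ} = 2 ^ (n - 1) ∧
    Nat.card {σ : Equiv.Perm (Fin n) // Avoids231 σ ∧ DoubleSimsun σ} = 2 ^ (n - 1) := by
  obtain ⟨m, rfl⟩ : ∃ m, n = m + 1 := ⟨n - 1, by omega⟩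
  have einv : {σ : Equiv.Perm (Fin (m + 1)) // StepLE σ⁻¹} ≃
      {σ : Equiv.Perm (Fin (m + 1)) // StepLE σ} :=
    { toFun := fun s => ⟨s.1⁻¹, s.2⟩
      invFun := fun s => ⟨s.1⁻¹, by simpa using s.2⟩
      left_inv := fun s => by simp
      right_inv := fun s => by simp }
  constructor
  · rw [Nat.card_congr (Equiv.subtypeEquivRight A_iff), card_stepLE]
    simp
  · rw [Nat.card_congr ((Equiv.subtypeEquivRight B_iff).trans einv), card_stepLE]
    simp
end
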